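/- Let N = ∀α. !(α ⊸ α) ⊸ §(α ⊸ α) be the type of tally integers in λ_LAL, with n̲ the Church numeral of n. For every polynomial P with coefficients in ℕ there exist an integer k and a closed λ_LAL term t_P of type N ⊸ §^k N such that t_P represents P, i.e., for every n ∈ ℕ, (t_P)n̲ reduces to §^k applied to the Church numeral of P(n). -/

import Mathlib

set_option maxHeartbeats 1000000

/-! ## Terms of the light affine lambda-calculus λ_LAL (de Bruijn indices) -/

inductive Tm : Type where
  | var : ℕ → Tm
  | lam : Tm → Tm
  | app : Tm → Tm → Tm
  | bang : Tm → Tm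
  /-- `letBang u t` is `let u be !x in t`; `t` binds de Bruijn index 0. -/
  | letBang : Tm → Tm → Tm
  | para : Tm → Tm
  /-- `letPara u t` is `let u be §x in t`; `t` binds de Bruijn index 0. -/
  | letPara : Tm → Tm → Tm

namespace LAL

def upRen (f : ℕ → ℕ) : ℕ → ℕ
  | 0 => 0
  | n + 1 => f n + 1

def rename (f : ℕ → ℕ) : Tm → Tm
  | .var n => .var (f n)
  | .lam t => .lam (rename (upRen f) t)
  | .app t u => .app (rename f t) (rename f u)
  | .bang t => .bang (rename f t)
  | .letBang u t => .letBang (rename f u) (rename (upRen f) t)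
  | .para t => .para (rename f t)
  | .letPara u t => .letPara (rename f u) (rename (upRen f) t)

/-- Capture-avoiding substitution `t[u / var k]` (indices above `k` are shifted
down). -/
def sub : Tm → ℕ → Tm → Tm
  | .var n, k, u => if n = k then rename (· + k) u else if k < n then .var (n - 1) else .var n
  | .lam t, k, u => .lam (sub t (k + 1) u)
  | .app t v, k, u => .app (sub t k u) (sub v k u)
  | .bang t, k, u => .bang (sub t k u)
  | .letBang v t, k, u => .letBang (sub v k u) (sub t (k + 1) u)
  | .para t, k, u => .para (sub t k u)
  | .letPara v t, k, u => .letPara (sub v k u) (sub t (k + 1) u)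

/-! ## Reduction -/

inductive Rule : Type where
  | beta | bang | para | com1 | com2

/-- One-step reduction of λ_LAL: contextual closure of the rules
(β), (!), (§), (com1), (com2). -/
inductive Step : Rule → Tm → Tm → Prop where
  | beta {t u} : Step .beta (.app (.lam t) u) (sub t 0 u)
  | bang {t u} : Step .bang (.letBang (.bang u) t) (sub t 0 u)
  | para {t u} : Step .para (.letPara (.para u) t) (sub t 0 u)
  | com1BB {u₁ t₁ t₂} : Step .com1 (.letBang (.letBang u₁ t₁) t₂)
      (.letBang u₁ (.letBang t₁ (rename (upRen (· + 1)) t₂)))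
  | com1BP {u₁ t₁ t₂} : Step .com1 (.letPara (.letBang u₁ t₁) t₂)
      (.letBang u₁ (.letPara t₁ (rename (upRen (· + 1)) t₂)))
  | com1PB {u₁ t₁ t₂} : Step .com1 (.letBang (.letPara u₁ t₁) t₂)
      (.letPara u₁ (.letBang t₁ (rename (upRen (· + 1)) t₂)))
  | com1PP {u₁ t₁ t₂} : Step .com1 (.letPara (.letPara u₁ t₁) t₂)
      (.letPara u₁ (.letPara t₁ (rename (upRen (· + 1)) t₂)))
  | com2B {u₁ t₁ t₂} : Step .com2 (.app (.letBang u₁ t₁) t₂)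
      (.letBang u₁ (.app t₁ (rename (· + 1) t₂)))
  | com2P {u₁ t₁ t₂} : Step .com2 (.app (.letPara u₁ t₁) t₂)
      (.letPara u₁ (.app t₁ (rename (· + 1) t₂)))
  | congLam {r t t'} : Step r t t' → Step r (.lam t) (.lam t')
  | congApp₁ {r t t' u} : Step r t t' → Step r (.app t u) (.app t' u)
  | congApp₂ {r t u u'} : Step r u u' → Step r (.app t u) (.app t u')
  | congBang {r t t'} : Step r t t' → Step r (.bang t) (.bang t')
  | congPara {r t t'} : Step r t t' → Step r (.para t) (.para t')
  | congLetBang₁ {r u u' t} : Step r u u' → Step r (.letBang u t) (.letBang u' t)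
  | congLetBang₂ {r u t t'} : Step r t t' → Step r (.letBang u t) (.letBang u t')
  | congLetPara₁ {r u u' t} : Step r u u' → Step r (.letPara u t) (.letPara u' t)
  | congLetPara₂ {r u t t'} : Step r t t' → Step r (.letPara u t) (.letPara u t')

/-- Many-step reduction. -/
def Red : Tm → Tm → Prop := Relation.ReflTransGen (fun a b => ∃ r, Step r a b)

/-! ## Types of intuitionistic Light Affine Logic -/

inductive Ty : Type where
  | tvar : ℕ → Ty
  | lolli : Ty → Ty → Ty
  | bang : Ty → Ty
  | para : Ty → Ty
  | all : Ty → Ty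

def liftTy (c : ℕ) : Ty → Ty
  | .tvar n => if n < c then .tvar n else .tvar (n + 1)
  | .lolli A B => .lolli (liftTy c A) (liftTy c B)
  | .bang A => .bang (liftTy c A)
  | .para A => .para (liftTy c A)
  | .all A => .all (liftTy (c + 1) A)

def substTy : Ty → ℕ → Ty → Ty
  | .tvar n, k, B => if n = k then (liftTy 0)^[k] B else if k < n then .tvar (n - 1) else .tvar n
  | .lolli A C, k, B => .lolli (substTy A k B) (substTy C k B)
  | .bang A, k, B => .bang (substTy A k B)
  | .para A, k, B => .para (substTy A k B)
  | .all A, k, B => .all (substTy A (k + 1) B)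

/-! ## Syntactic sugar: tensor -/

/-- `A ⊗ B = ∀α.((A ⊸ B ⊸ α) ⊸ α)`. -/
def tensorTy (A B : Ty) : Ty :=
  .all (.lolli (.lolli (liftTy 0 A) (.lolli (liftTy 0 B) (.tvar 0))) (.tvar 0))

/-- `t ⊗ u = λy.((y)t)u`. -/
def tensorTm (t u : Tm) : Tm :=
  .lam (.app (.app (.var 0) (rename (· + 1) t)) (rename (· + 1) u))

/-- `let u be x⊗y in t = (u)λx.λy.t`; in `t`, index 1 is the first component
and index 0 the second. -/
def letTen (u t : Tm) : Tm := .app u (.lam (.lam t))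

/-! ## Typing (natural-deduction presentation of LAL, with discharged marks) -/

inductive Mark : Type where
  | pl  -- plain
  | db  -- !-discharged
  | dp  -- §-discharged
  deriving DecidableEq

/-- Transposition of de Bruijn indices `i` and `i+1`. -/
def swapF (i : ℕ) : ℕ → ℕ := fun n => if n = i then i + 1 else if n = i + 1 then i else n

inductive Tj : List (Mark × Ty) → Tm → Ty → Prop where
  | ax (A : Ty) : Tj [(.pl, A)] (.var 0) A
  | weak {Γ t A} (e : Mark × Ty) : Tj Γ t A → Tj (e :: Γ) (rename (· + 1) t) A
  | exch {Γ Δ : List (Mark × Ty)} {a b t A} :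
      Tj (Γ ++ a :: b :: Δ) t A → Tj (Γ ++ b :: a :: Δ) (rename (swapF Γ.length) t) A
  | cntr {Γ t A B} : Tj ((.db, B) :: (.db, B) :: Γ) t A →
      Tj ((.db, B) :: Γ) (rename Nat.pred t) A
  | cut {Γ Δ : List (Mark × Ty)} {u t A C} : Tj Δ u A → Tj ((.pl, A) :: Γ) t C →
      Tj (Γ ++ Δ) (sub t 0 (rename (· + Γ.length) u)) C
  | lam {Γ t A B} : Tj ((.pl, A) :: Γ) t B → Tj Γ (.lam t) (.lolli A B)
  | app {Γ Δ : List (Mark × Ty)} {t u A B} : Tj Γ t (.lolli A B) → Tj Δ u A →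
      Tj (Γ ++ Δ) (.app t (rename (· + Γ.length) u)) B
  | allI {Γ : List (Mark × Ty)} {t A} :
      Tj (Γ.map (fun e => (e.1, liftTy 0 e.2))) t A → Tj Γ t (.all A)
  | allE {Γ t A} (B : Ty) : Tj Γ t (.all A) → Tj Γ t (substTy A 0 B)
  | bangI₀ {t A} : Tj [] t A → Tj [] (.bang t) (.bang A)
  | bangI₁ {t A B} : Tj [(.pl, B)] t A → Tj [(.db, B)] (.bang t) (.bang A)
  | bangE {Γ Δ : List (Mark × Ty)} {u t A C} : Tj Δ u (.bang A) →
      Tj ((.db, A) :: Γ) t C →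
      Tj (Γ ++ Δ) (.letBang (rename (· + Γ.length) u) t) C
  | paraI {Γ Γ' : List (Mark × Ty)} {t A} : Tj Γ t A →
      (∀ e ∈ Γ, e.1 = Mark.pl) →
      List.Forall₂ (fun (e e' : Mark × Ty) => e'.2 = e.2 ∧ e'.1 ≠ Mark.pl) Γ Γ' →
      Tj Γ' (.para t) (.para A)
  | paraE {Γ Δ : List (Mark × Ty)} {u t A C} : Tj Δ u (.para A) →
      Tj ((.dp, A) :: Γ) t C →
      Tj (Γ ++ Δ) (.letPara (rename (· + Γ.length) u) t) C

/-! ## Church encodings -/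

/-- Tally integers : `N = ∀α. !(α ⊸ α) ⊸ §(α ⊸ α)`. -/
def natTy : Ty := .all (.lolli (.bang (.lolli (.tvar 0) (.tvar 0)))
  (.para (.lolli (.tvar 0) (.tvar 0))))

/-- Church numeral `n̲` of type `N`. -/
def churchNat (n : ℕ) : Tm :=
  .lam (.letBang (.var 0) (.para (.lam ((fun b => Tm.app (.var 1) b)^[n] (.var 0)))))

/-- Lists of elements of type `A` : `L_A = ∀α. !(A ⊸ α ⊸ α) ⊸ §(α ⊸ α)`. -/
def listTy (A : Ty) : Ty := .all (.lolli (.bang (.lolli (liftTy 0 A)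
  (.lolli (.tvar 0) (.tvar 0)))) (.para (.lolli (.tvar 0) (.tvar 0))))

/-- Church encoding of the list whose elements are the terms `as`. -/
def encListTm (as : List Tm) : Tm :=
  .lam (.letBang (.var 0) (.para (.lam
    (as.foldr (fun a acc => Tm.app (.app (.var 1) (rename (· + 3) a)) acc) (.var 0)))))

/-! ## Pure lambda-terms, β-reduction, and system F -/

inductive PTm : Type where
  | var : ℕ → PTm
  | lam : PTm → PTm
  | app : PTm → PTm → PTm

def prename (f : ℕ → ℕ) : PTm → PTm
  | .var n => .var (f n)
  | .lam t => .lam (prename (upRen f) t)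
  | .app t u => .app (prename f t) (prename f u)

def psub : PTm → ℕ → PTm → PTm
  | .var n, k, u => if n = k then prename (· + k) u else if k < n then .var (n - 1) else .var n
  | .lam t, k, u => .lam (psub t (k + 1) u)
  | .app t v, k, u => .app (psub t k u) (psub v k u)

/-- β-reduction of the pure lambda-calculus (one step, contextual). -/
inductive PStep : PTm → PTm → Prop where
  | beta {t u} : PStep (.app (.lam t) u) (psub t 0 u)
  | congLam {t t'} : PStep t t' → PStep (.lam t) (.lam t')
  | congApp₁ {t t' u} : PStep t t' → PStep (.app t u) (.app t' u)
  | congApp₂ {t u u'} : PStep u u' → PStep (.app t u) (.app t u')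

/-- Zero or more β-reduction steps. -/
def PRed : PTm → PTm → Prop := Relation.ReflTransGen PStep

/-- Erasure of λ_LAL terms to pure lambda-terms. -/
def eraseTm : Tm → PTm
  | .var n => .var n
  | .lam t => .lam (eraseTm t)
  | .app t u => .app (eraseTm t) (eraseTm u)
  | .bang t => eraseTm t
  | .para t => eraseTm t
  | .letBang u t => psub (eraseTm t) 0 (eraseTm u)
  | .letPara u t => psub (eraseTm t) 0 (eraseTm u)

/-- Types of system F. -/
inductive FTy : Type where
  | tvar : ℕ → FTy
  | arr : FTy → FTy → FTy
  | all : FTy → FTy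

def liftF (c : ℕ) : FTy → FTy
  | .tvar n => if n < c then .tvar n else .tvar (n + 1)
  | .arr A B => .arr (liftF c A) (liftF c B)
  | .all A => .all (liftF (c + 1) A)

def substF : FTy → ℕ → FTy → FTy
  | .tvar n, k, B => if n = k then (liftF 0)^[k] B else if k < n then .tvar (n - 1) else .tvar n
  | .arr A C, k, B => .arr (substF A k B) (substF C k B)
  | .all A, k, B => .all (substF A (k + 1) B)

/-- Erasure of LAL formulas to system F types. -/
def eraseTy : Ty → FTy
  | .tvar n => .tvar n
  | .lolli A B => .arr (eraseTy A) (eraseTy B)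
  | .bang A => eraseTy A
  | .para A => eraseTy A
  | .all A => .all (eraseTy A)

/-- System F typing. -/
inductive FTj : List FTy → PTm → FTy → Prop where
  | var {Γ n A} : Γ[n]? = some A → FTj Γ (.var n) A
  | lam {Γ t A B} : FTj (A :: Γ) t B → FTj Γ (.lam t) (.arr A B)
  | app {Γ t u A B} : FTj Γ t (.arr A B) → FTj Γ u A → FTj Γ (.app t u) B
  | allI {Γ t A} : FTj (Γ.map (liftF 0)) t A → FTj Γ t (.all A)
  | allE {Γ t A} (B : FTy) : FTj Γ t (.all A) → FTj Γ t (substF A 0 B)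

end LAL
namespace LAL
open Tm

/-! ### Infrastructure: renaming and substitution -/

theorem upRen_ext {f g : ℕ → ℕ} (h : ∀ n, f n = g n) : ∀ n, upRen f n = upRen g n
  | 0 => rfl
  | n+1 => by simp only [upRen, h]

theorem rename_ext : ∀ (t : Tm) (f g : ℕ → ℕ), (∀ n, f n = g n) → rename f t = rename g t
  | .var n, f, g, h => by simp [rename, h]
  | .lam t, f, g, h => by simp [rename]; exact rename_ext t _ _ (upRen_ext h)
  | .app t u, f, g, h => by
      simp [rename]; exact ⟨rename_ext t _ _ h, rename_ext u _ _ h⟩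
  | .bang t, f, g, h => by simp [rename]; exact rename_ext t _ _ h
  | .letBang u t, f, g, h => by
      simp [rename]; exact ⟨rename_ext u _ _ h, rename_ext t _ _ (upRen_ext h)⟩
  | .para t, f, g, h => by simp [rename]; exact rename_ext t _ _ h
  | .letPara u t, f, g, h => by
      simp [rename]; exact ⟨rename_ext u _ _ h, rename_ext t _ _ (upRen_ext h)⟩

theorem upRen_id {f : ℕ → ℕ} (h : ∀ n, f n = n) : ∀ n, upRen f n = n
  | 0 => rfl
  | n+1 => by simp only [upRen, h]

theorem rename_id : ∀ (t : Tm) (f : ℕ → ℕ), (∀ n, f n = n) → rename f t = t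
  | .var n, f, h => by simp [rename, h]
  | .lam t, f, h => by simp [rename]; exact rename_id t _ (upRen_id h)
  | .app t u, f, h => by simp [rename]; exact ⟨rename_id t _ h, rename_id u _ h⟩
  | .bang t, f, h => by simp [rename]; exact rename_id t _ h
  | .letBang u t, f, h => by
      simp [rename]; exact ⟨rename_id u _ h, rename_id t _ (upRen_id h)⟩
  | .para t, f, h => by simp [rename]; exact rename_id t _ h
  | .letPara u t, f, h => by
      simp [rename]; exact ⟨rename_id u _ h, rename_id t _ (upRen_id h)⟩

theorem rename_zero (t : Tm) : rename (· + 0) t = t := rename_id t _ (fun n => rfl)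

theorem upRen_comp (f g : ℕ → ℕ) : ∀ n, upRen g (upRen f n) = upRen (fun m => g (f m)) n
  | 0 => rfl
  | n+1 => by simp only [upRen]

theorem rename_comp : ∀ (t : Tm) (f g : ℕ → ℕ),
    rename g (rename f t) = rename (fun n => g (f n)) t
  | .var n, f, g => rfl
  | .lam t, f, g => by
      simp [rename, rename_comp t]; exact rename_ext t _ _ (upRen_comp f g)
  | .app t u, f, g => by simp [rename, rename_comp t, rename_comp u]
  | .bang t, f, g => by simp [rename, rename_comp t]
  | .letBang u t, f, g => by
      simp [rename, rename_comp u, rename_comp t]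
      exact rename_ext t _ _ (upRen_comp f g)
  | .para t, f, g => by simp [rename, rename_comp t]
  | .letPara u t, f, g => by
      simp [rename, rename_comp u, rename_comp t]
      exact rename_ext t _ _ (upRen_comp f g)

/-- all free variables of `t` are `< k` -/
def vb (k : ℕ) : Tm → Bool
  | .var n => n < k
  | .lam t => vb (k+1) t
  | .app t u => vb k t && vb k u
  | .bang t => vb k t
  | .letBang u t => vb k u && vb (k+1) t
  | .para t => vb k t
  | .letPara u t => vb k u && vb (k+1) t

theorem vb_mono : ∀ (t : Tm) (k k' : ℕ), k ≤ k' → vb k t → vb k' t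
  | .var n, k, k', h, hv => by
      simp [vb] at hv ⊢; omega
  | .lam t, k, k', h, hv => vb_mono t (k+1) (k'+1) (by omega) hv
  | .app t u, k, k', h, hv => by
      simp [vb] at hv ⊢; exact ⟨vb_mono t _ _ h hv.1, vb_mono u _ _ h hv.2⟩
  | .bang t, k, k', h, hv => vb_mono t k k' h hv
  | .letBang u t, k, k', h, hv => by
      simp [vb] at hv ⊢
      exact ⟨vb_mono u _ _ h hv.1, vb_mono t _ _ (by omega) hv.2⟩
  | .para t, k, k', h, hv => vb_mono t k k' h hv
  | .letPara u t, k, k', h, hv => by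
      simp [vb] at hv ⊢
      exact ⟨vb_mono u _ _ h hv.1, vb_mono t _ _ (by omega) hv.2⟩

theorem rename_vb : ∀ (t : Tm) (k : ℕ) (f g : ℕ → ℕ), vb k t →
    (∀ n < k, f n = g n) → rename f t = rename g t
  | .var n, k, f, g, hv, h => by
      simp [vb] at hv; simp [rename, h n hv]
  | .lam t, k, f, g, hv, h => by
      simp [rename]
      exact rename_vb t (k+1) _ _ hv (by
        intro n hn; cases n with
        | zero => rfl
        | succ m => simp only [upRen]; rw [h m (by omega)])
  | .app t u, k, f, g, hv, h => by
      simp [vb] at hv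
      simp [rename, rename_vb t k f g hv.1 h, rename_vb u k f g hv.2 h]
  | .bang t, k, f, g, hv, h => by
      simp [rename, rename_vb t k f g hv h]
  | .letBang u t, k, f, g, hv, h => by
      simp [vb] at hv
      simp [rename, rename_vb u k f g hv.1 h]
      exact rename_vb t (k+1) _ _ hv.2 (by
        intro n hn; cases n with
        | zero => rfl
        | succ m => simp only [upRen]; rw [h m (by omega)])
  | .para t, k, f, g, hv, h => by
      simp [rename, rename_vb t k f g hv h]
  | .letPara u t, k, f, g, hv, h => by
      simp [vb] at hv
      simp [rename, rename_vb u k f g hv.1 h]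
      exact rename_vb t (k+1) _ _ hv.2 (by
        intro n hn; cases n with
        | zero => rfl
        | succ m => simp only [upRen]; rw [h m (by omega)])

theorem rename_closed {t : Tm} (hv : vb 0 t) (f : ℕ → ℕ) : rename f t = t := by
  rw [rename_vb t 0 f id hv (by intro n hn; omega)]
  exact rename_id t _ (fun n => rfl)

theorem sub_vb : ∀ (t : Tm) (k j : ℕ) (u : Tm), vb k t → k ≤ j → sub t j u = t
  | .var n, k, j, u, hv, h => by
      simp [vb] at hv; unfold sub
      rw [if_neg (by omega), if_neg (by omega)]
  | .lam t, k, j, u, hv, h => by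
      simp [sub, sub_vb t (k+1) (j+1) u hv (by omega)]
  | .app t v, k, j, u, hv, h => by
      simp [vb] at hv
      simp [sub, sub_vb t k j u hv.1 h, sub_vb v k j u hv.2 h]
  | .bang t, k, j, u, hv, h => by simp [sub, sub_vb t k j u hv h]
  | .letBang v t, k, j, u, hv, h => by
      simp [vb] at hv
      simp [sub, sub_vb v k j u hv.1 h, sub_vb t (k+1) (j+1) u hv.2 (by omega)]
  | .para t, k, j, u, hv, h => by simp [sub, sub_vb t k j u hv h]
  | .letPara v t, k, j, u, hv, h => by
      simp [vb] at hv
      simp [sub, sub_vb v k j u hv.1 h, sub_vb t (k+1) (j+1) u hv.2 (by omega)]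

theorem sub_closed {t : Tm} (hv : vb 0 t) (j : ℕ) (u : Tm) : sub t j u = t :=
  sub_vb t 0 j u hv (by omega)


def upRenN : ℕ → (ℕ → ℕ) → ℕ → ℕ
  | 0, f => f
  | j+1, f => upRen (upRenN j f)

theorem upRenN_shift : ∀ (j n : ℕ), upRenN j (· + 1) n = if n < j then n else n + 1
  | 0, n => by simp [upRenN]
  | j+1, 0 => by simp [upRenN, upRen]
  | j+1, n+1 => by
      simp only [upRenN, upRen, upRenN_shift j n]
      by_cases h : n < j
      · simp [h, Nat.succ_lt_succ h]
      · simp [h]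

theorem sub_rename_up {u : Tm} (hu : vb 0 u) :
    ∀ (t : Tm) (j i : ℕ), j ≤ i →
      sub (rename (upRenN j (· + 1)) t) (i + 1) u
        = rename (upRenN j (· + 1)) (sub t i u)
  | .var n, j, i, h => by
      have hs : ∀ m, rename (upRenN j (· + 1)) (Tm.var m)
          = Tm.var (if m < j then m else m + 1) := by
        intro m; simp [rename, upRenN_shift]
      have sv : ∀ (m k : ℕ), sub (Tm.var m) k u
          = if m = k then u else if k < m then Tm.var (m-1) else Tm.var m := by
        intro m k; simp only [sub]
        split_ifs <;> simp [rename_closed hu]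
      show sub (rename (upRenN j (· + 1)) (Tm.var n)) (i+1) u
          = rename (upRenN j (· + 1)) (sub (Tm.var n) i u)
      rcases Nat.lt_or_ge n j with hn | hn
      · rw [hs, if_pos hn, sv, if_neg (by omega), if_neg (by omega),
          sv, if_neg (by omega), if_neg (by omega), hs, if_pos hn]
      · rcases Nat.lt_trichotomy n i with hni | hni | hni
        · rw [hs, if_neg (by omega), sv, if_neg (by omega), if_neg (by omega),
            sv, if_neg (by omega), if_neg (by omega), hs, if_neg (by omega)]
        · subst hni
          rw [hs, if_neg (by omega), sv, if_pos rfl, sv, if_pos rfl, rename_closed hu]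
        · rw [hs, if_neg (by omega), sv, if_neg (by omega), if_pos (by omega),
            sv, if_neg (by omega), if_pos (by omega), hs, if_neg (by omega)]
          congr 1; omega
  | .lam t, j, i, h => by
      simp only [rename, sub]
      exact congrArg Tm.lam (sub_rename_up hu t (j+1) (i+1) (by omega))
  | .app t v, j, i, h => by
      simp only [rename, sub]
      rw [sub_rename_up hu t j i h, sub_rename_up hu v j i h]
  | .bang t, j, i, h => by
      simp only [rename, sub]
      rw [sub_rename_up hu t j i h]
  | .letBang v t, j, i, h => by
      simp only [rename, sub]
      rw [sub_rename_up hu v j i h]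
      exact congrArg _ (sub_rename_up hu t (j+1) (i+1) (by omega))
  | .para t, j, i, h => by
      simp only [rename, sub]
      rw [sub_rename_up hu t j i h]
  | .letPara v t, j, i, h => by
      simp only [rename, sub]
      rw [sub_rename_up hu v j i h]
      exact congrArg _ (sub_rename_up hu t (j+1) (i+1) (by omega))

theorem sub_rename1 {u : Tm} (hu : vb 0 u) (t : Tm) (i : ℕ) :
    sub (rename (· + 1) t) (i + 1) u = rename (· + 1) (sub t i u) :=
  sub_rename_up hu t 0 i (by omega)

/-! ### Reduction helpers -/

theorem Red.rfl {t : Tm} : Red t t := Relation.ReflTransGen.refl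

theorem Red.single {r : Rule} {a b : Tm} (h : Step r a b) : Red a b :=
  Relation.ReflTransGen.single ⟨r, h⟩

theorem Red.trans' {a b c : Tm} (h1 : Red a b) (h2 : Red b c) : Red a c :=
  Relation.ReflTransGen.trans h1 h2

theorem Red.congr {F : Tm → Tm} (hF : ∀ r a b, Step r a b → Step r (F a) (F b))
    {a b : Tm} (h : Red a b) : Red (F a) (F b) := by
  induction h with
  | refl => exact Relation.ReflTransGen.refl
  | tail _ hbc ih =>
      obtain ⟨r, hr⟩ := hbc
      exact ih.tail ⟨r, hF r _ _ hr⟩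

theorem Red.appL {t t' u : Tm} (h : Red t t') : Red (.app t u) (.app t' u) :=
  Red.congr (fun _ _ _ h => .congApp₁ h) h

theorem Red.appR {t u u' : Tm} (h : Red u u') : Red (.app t u) (.app t u') :=
  Red.congr (fun _ _ _ h => .congApp₂ h) h

theorem Red.lamC {t t' : Tm} (h : Red t t') : Red (.lam t) (.lam t') :=
  Red.congr (fun _ _ _ h => .congLam h) h

theorem Red.bangC {t t' : Tm} (h : Red t t') : Red (.bang t) (.bang t') :=
  Red.congr (fun _ _ _ h => .congBang h) h

theorem Red.paraC {t t' : Tm} (h : Red t t') : Red (.para t) (.para t') :=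
  Red.congr (fun _ _ _ h => .congPara h) h

theorem Red.letBangL {u u' t : Tm} (h : Red u u') : Red (.letBang u t) (.letBang u' t) :=
  Red.congr (fun _ _ _ h => .congLetBang₁ h) h

theorem Red.letBangR {u t t' : Tm} (h : Red t t') : Red (.letBang u t) (.letBang u t') :=
  Red.congr (fun _ _ _ h => .congLetBang₂ h) h

theorem Red.letParaL {u u' t : Tm} (h : Red u u') : Red (.letPara u t) (.letPara u' t) :=
  Red.congr (fun _ _ _ h => .congLetPara₁ h) h

theorem Red.letParaR {u t t' : Tm} (h : Red t t') : Red (.letPara u t) (.letPara u t') :=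
  Red.congr (fun _ _ _ h => .congLetPara₂ h) h

/-! ### Iterated application -/

theorem rename_appIter (f : ℕ → ℕ) (w t : Tm) :
    ∀ m, rename f ((fun b => Tm.app w b)^[m] t)
      = (fun b => Tm.app (rename f w) b)^[m] (rename f t)
  | 0 => rfl
  | m+1 => by
      rw [Function.iterate_succ_apply', Function.iterate_succ_apply']
      simp only [rename]
      rw [rename_appIter f w t m]

theorem sub_appIter (k : ℕ) (u w t : Tm) :
    ∀ m, sub ((fun b => Tm.app w b)^[m] t) k u
      = (fun b => Tm.app (sub w k u) b)^[m] (sub t k u)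
  | 0 => rfl
  | m+1 => by
      rw [Function.iterate_succ_apply', Function.iterate_succ_apply']
      simp only [sub]
      rw [sub_appIter k u w t m]

theorem Red.appIter (w : Tm) {t t' : Tm} (h : Red t t') :
    ∀ m, Red ((fun b => Tm.app w b)^[m] t) ((fun b => Tm.app w b)^[m] t')
  | 0 => h
  | m+1 => by
      rw [Function.iterate_succ_apply', Function.iterate_succ_apply']
      exact Red.appR (Red.appIter w h m)

theorem vb_appIter {k : ℕ} {w t : Tm} (hw : vb k w) (ht : vb k t) :
    ∀ m, vb k ((fun b => Tm.app w b)^[m] t)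
  | 0 => ht
  | m+1 => by
      rw [Function.iterate_succ_apply']
      simp [vb, hw, vb_appIter hw ht m]


/-! ### Gadget terms -/

def zeroTm : Tm := churchNat 0
def oneTm : Tm := churchNat 1

/-- `add = λa.λb.λu. let u be !f in let (a)!f be §g in let (b)!f be §g' in
§(λz. (g)(g')z)` -/
def addTm : Tm := .lam (.lam (.lam (.letBang (.var 0)
  (.letPara (.app (.var 3) (.bang (.var 0)))
    (.letPara (.app (.var 3) (.bang (.var 1)))
      (.para (.lam (.app (.var 2) (.app (.var 1) (.var 0))))))))))

def addT (a b : Tm) : Tm := .app (.app addTm a) b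

def succTm : Tm := .lam (addT (.var 0) oneTm)

/-- `S = λb. let b be !y in !(add y 1)` : !N ⊸ !N -/
def sTm : Tm := .lam (.letBang (.var 0) (.bang (addT (.var 0) oneTm)))

def numC (c : ℕ) : Tm := (fun b => Tm.app succTm b)^[c] zeroTm

def addStep (n : ℕ) : Tm := .lam (addT (.var 0) (churchNat n))

def funPow (w : Tm) (a : ℕ) : Tm := .lam ((fun b => Tm.app w b)^[a] (.var 0))

/-! ### Closedness facts -/

theorem vb_churchNat (n : ℕ) : vb 0 (churchNat n) := by
  show vb 0 (.lam (.letBang (.var 0) (.para (.lam ((fun b => Tm.app (.var 1) b)^[n] (.var 0))))))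
  simp only [vb, Bool.and_eq_true]
  refine ⟨by decide, vb_appIter (by decide) (by decide) n⟩

theorem vb_zero : vb 0 zeroTm := vb_churchNat 0
theorem vb_one : vb 0 oneTm := vb_churchNat 1
theorem vb_addTm : vb 0 addTm := by decide
theorem vb_addT {k : ℕ} {a b : Tm} (ha : vb k a) (hb : vb k b) : vb k (addT a b) := by
  simp [addT, vb, ha, hb, vb_mono addTm 0 k (by omega) vb_addTm]
theorem vb_succTm : vb 0 succTm := by decide
theorem vb_sTm : vb 0 sTm := by decide
theorem vb_numC (c : ℕ) : vb 0 (numC c) :=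
  vb_appIter vb_succTm vb_zero c
theorem vb_addStep (n : ℕ) : vb 0 (addStep n) := by
  show vb 0 (.lam (addT (.var 0) (churchNat n)))
  exact vb_addT (by decide) (vb_mono _ 0 1 (by omega) (vb_churchNat n))
theorem vb_funPow {w : Tm} (hw : vb 0 w) (a : ℕ) : vb 0 (funPow w a) :=
  vb_appIter (vb_mono w 0 1 (by omega) hw) (by decide) a

/-! ### Reduction: applying a Church numeral -/

theorem red_church_app (m : ℕ) (w : Tm) :
    Red (.app (churchNat m) (.bang w))
      (.para (.lam ((fun b => Tm.app (rename (· + 1) w) b)^[m] (.var 0)))) := by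
  have h1 : Red (.app (churchNat m) (.bang w))
      (sub (.letBang (.var 0) (.para (.lam ((fun b => Tm.app (.var 1) b)^[m] (.var 0))))) 0
        (.bang w)) := Red.single Step.beta
  have e1 : sub (.letBang (.var 0) (.para (.lam ((fun b => Tm.app (.var 1) b)^[m] (.var 0))))) 0
        (.bang w)
      = .letBang (.bang w) (.para (.lam ((fun b => Tm.app (.var 1) b)^[m] (.var 0)))) := by
    simp only [sub, sub_appIter, if_pos rfl]
    rw [rename_zero]
    norm_num
  rw [e1] at h1
  refine h1.trans' ?_
  have h2 : Red (Tm.letBang (.bang w) (.para (.lam ((fun b => Tm.app (.var 1) b)^[m] (.var 0)))))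
      (sub (.para (.lam ((fun b => Tm.app (.var 1) b)^[m] (.var 0)))) 0 w) := Red.single Step.bang
  have e2 : sub (.para (.lam ((fun b => Tm.app (.var 1) b)^[m] (.var 0)))) 0 w
      = .para (.lam ((fun b => Tm.app (rename (· + 1) w) b)^[m] (.var 0))) := by
    simp only [sub, sub_appIter, if_pos rfl]
    norm_num
  rw [e2] at h2
  exact h2

theorem red_funPow_app {w : Tm} (hw : vb 0 w) (a : ℕ) (t : Tm) :
    Red (.app (funPow w a) t) ((fun b => Tm.app w b)^[a] t) := by
  have h1 : Red (.app (funPow w a) t) (sub ((fun b => Tm.app w b)^[a] (.var 0)) 0 t) :=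
    Red.single Step.beta
  rwa [sub_appIter, sub_closed hw, show sub (.var 0) 0 t = t by
    simp only [sub, if_pos rfl]; exact rename_zero t] at h1

end LAL

namespace LAL
open Tm

/-! ### Reduction: addition -/

theorem red_add (a b : ℕ) :
    Red (addT (churchNat a) (churchNat b)) (churchNat (a + b)) := by
  have hca := vb_churchNat a
  have hcb := vb_churchNat b
  have rca' := red_church_app a (Tm.var 0)
  have rcb' := red_church_app b (Tm.var 0)
  unfold addT
  generalize hCa : churchNat a = Ca at hca rca' ⊢
  generalize hCb : churchNat b = Cb at hcb rcb' ⊢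
  -- step 1
  have r1 : Red (.app addTm Ca)
      (.lam (.lam (.letBang (.var 0)
        (.letPara (.app Ca (.bang (.var 0)))
          (.letPara (.app (.var 3) (.bang (.var 1)))
            (.para (.lam (.app (.var 2) (.app (.var 1) (.var 0)))))))))) := by
    have h : Red (.app addTm Ca) (sub (.lam (.lam (.letBang (.var 0)
        (.letPara (.app (.var 3) (.bang (.var 0)))
          (.letPara (.app (.var 3) (.bang (.var 1)))
            (.para (.lam (.app (.var 2) (.app (.var 1) (.var 0)))))))))) 0 Ca) :=
      Red.single Step.beta
    have e : (sub (.lam (.lam (.letBang (.var 0)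
        (.letPara (.app (.var 3) (.bang (.var 0)))
          (.letPara (.app (.var 3) (.bang (.var 1)))
            (.para (.lam (.app (.var 2) (.app (.var 1) (.var 0)))))))))) 0 Ca)
        = (.lam (.lam (.letBang (.var 0)
        (.letPara (.app Ca (.bang (.var 0)))
          (.letPara (.app (.var 3) (.bang (.var 1)))
            (.para (.lam (.app (.var 2) (.app (.var 1) (.var 0))))))))) : Tm) := by
      simp [sub, rename_closed hca]
    rwa [e] at h
  -- step 2
  have r2 : Red (.app (.lam (.lam (.letBang (.var 0)
        (.letPara (.app Ca (.bang (.var 0)))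
          (.letPara (.app (.var 3) (.bang (.var 1)))
            (.para (.lam (.app (.var 2) (.app (.var 1) (.var 0)))))))))) Cb)
      (.lam (.letBang (.var 0)
        (.letPara (.app Ca (.bang (.var 0)))
          (.letPara (.app Cb (.bang (.var 1)))
            (.para (.lam (.app (.var 2) (.app (.var 1) (.var 0))))))))) := by
    have h : Red _ (sub (.lam (.letBang (.var 0)
        (.letPara (.app Ca (.bang (.var 0)))
          (.letPara (.app (.var 3) (.bang (.var 1)))
            (.para (.lam (.app (.var 2) (.app (.var 1) (.var 0))))))))) 0 Cb) :=
      Red.single Step.beta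
    have e : (sub (.lam (.letBang (.var 0)
        (.letPara (.app Ca (.bang (.var 0)))
          (.letPara (.app (.var 3) (.bang (.var 1)))
            (.para (.lam (.app (.var 2) (.app (.var 1) (.var 0))))))))) 0 Cb)
        = (.lam (.letBang (.var 0)
        (.letPara (.app Ca (.bang (.var 0)))
          (.letPara (.app Cb (.bang (.var 1)))
            (.para (.lam (.app (.var 2) (.app (.var 1) (.var 0)))))))) : Tm) := by
      simp [sub, sub_closed hca, rename_closed hcb]
    rwa [e] at h
  -- step 3 : reduce (a)!f
  have rca : Red (.app Ca (.bang (.var 0)))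
      (.para (.lam ((fun b => Tm.app (.var 1) b)^[a] (.var 0)))) := rca'
  have r3 : Red (.lam (.letBang (.var 0)
        (.letPara (.app Ca (.bang (.var 0)))
          (.letPara (.app Cb (.bang (.var 1)))
            (.para (.lam (.app (.var 2) (.app (.var 1) (.var 0)))))))))
      (Tm.lam (.letBang (.var 0) (.letPara
        (.para (.lam ((fun b => Tm.app (.var 1) b)^[a] (.var 0))))
        (.letPara (.app Cb (.bang (.var 1)))
          (.para (.lam (.app (.var 2) (.app (.var 1) (.var 0))))))))) :=
    Red.lamC (Red.letBangR (Red.letParaL rca))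
  -- step 4 : para-step for g
  have r4 : Red (Tm.lam (.letBang (.var 0) (.letPara
        (.para (.lam ((fun b => Tm.app (.var 1) b)^[a] (.var 0))))
        (.letPara (.app Cb (.bang (.var 1)))
          (.para (.lam (.app (.var 2) (.app (.var 1) (.var 0)))))))))
      (Tm.lam (.letBang (.var 0)
        (.letPara (.app Cb (.bang (.var 0)))
          (.para (.lam (.app (.lam ((fun b => Tm.app (.var 3) b)^[a] (.var 0)))
            (.app (.var 1) (.var 0)))))))) := by
    have h : Red (Tm.letPara
        (.para (.lam ((fun b => Tm.app (.var 1) b)^[a] (.var 0))))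
        (.letPara (.app Cb (.bang (.var 1)))
          (.para (.lam (.app (.var 2) (.app (.var 1) (.var 0)))))))
        (sub (.letPara (.app Cb (.bang (.var 1)))
          (.para (.lam (.app (.var 2) (.app (.var 1) (.var 0)))))) 0
          (.lam ((fun b => Tm.app (.var 1) b)^[a] (.var 0)))) := Red.single Step.para
    have e : (sub (.letPara (.app Cb (.bang (.var 1)))
          (.para (.lam (.app (.var 2) (.app (.var 1) (.var 0)))))) 0
          (.lam ((fun b => Tm.app (.var 1) b)^[a] (.var 0))))
        = (.letPara (.app Cb (.bang (.var 0)))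
          (.para (.lam (.app (.lam ((fun b => Tm.app (.var 3) b)^[a] (.var 0)))
            (.app (.var 1) (.var 0))))) : Tm) := by
      simp [sub, sub_closed hcb, rename_appIter, rename, upRen]
    rw [e] at h
    exact Red.lamC (Red.letBangR h)
  -- step 5 : reduce (b)!f
  have rcb : Red (.app Cb (.bang (.var 0)))
      (.para (.lam ((fun b => Tm.app (.var 1) b)^[b] (.var 0)))) := rcb'
  have r5 : Red (Tm.lam (.letBang (.var 0)
        (.letPara (.app Cb (.bang (.var 0)))
          (.para (.lam (.app (.lam ((fun b => Tm.app (.var 3) b)^[a] (.var 0)))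
            (.app (.var 1) (.var 0))))))))
      (Tm.lam (.letBang (.var 0)
        (.letPara (.para (.lam ((fun b => Tm.app (.var 1) b)^[b] (.var 0))))
          (.para (.lam (.app (.lam ((fun b => Tm.app (.var 3) b)^[a] (.var 0)))
            (.app (.var 1) (.var 0)))))))) :=
    Red.lamC (Red.letBangR (Red.letParaL rcb))
  -- step 6 : para-step for g'
  have r6 : Red (Tm.lam (.letBang (.var 0)
        (.letPara (.para (.lam ((fun b => Tm.app (.var 1) b)^[b] (.var 0))))
          (.para (.lam (.app (.lam ((fun b => Tm.app (.var 3) b)^[a] (.var 0)))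
            (.app (.var 1) (.var 0))))))))
      (Tm.lam (.letBang (.var 0)
        (.para (.lam (.app (.lam ((fun b => Tm.app (.var 2) b)^[a] (.var 0)))
          (.app (.lam ((fun b => Tm.app (.var 2) b)^[b] (.var 0))) (.var 0))))))) := by
    have h : Red (Tm.letPara (.para (.lam ((fun b => Tm.app (.var 1) b)^[b] (.var 0))))
          (.para (.lam (.app (.lam ((fun b => Tm.app (.var 3) b)^[a] (.var 0)))
            (.app (.var 1) (.var 0))))))
        (sub (.para (.lam (.app (.lam ((fun b => Tm.app (.var 3) b)^[a] (.var 0)))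
            (.app (.var 1) (.var 0))))) 0
          (.lam ((fun b => Tm.app (.var 1) b)^[b] (.var 0)))) := Red.single Step.para
    have e : (sub (.para (.lam (.app (.lam ((fun b => Tm.app (.var 3) b)^[a] (.var 0)))
            (.app (.var 1) (.var 0))))) 0
          (.lam ((fun b => Tm.app (.var 1) b)^[b] (.var 0))))
        = (.para (.lam (.app (.lam ((fun b => Tm.app (.var 2) b)^[a] (.var 0)))
          (.app (.lam ((fun b => Tm.app (.var 2) b)^[b] (.var 0))) (.var 0)))) : Tm) := by
      simp [sub, sub_appIter, rename_appIter, rename, upRen]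
    rw [e] at h
    exact Red.lamC (Red.letBangR h)
  -- step 7 : inner β
  have r7 : Red (Tm.lam (.letBang (.var 0)
        (.para (.lam (.app (.lam ((fun b => Tm.app (.var 2) b)^[a] (.var 0)))
          (.app (.lam ((fun b => Tm.app (.var 2) b)^[b] (.var 0))) (.var 0)))))))
      (Tm.lam (.letBang (.var 0)
        (.para (.lam (.app (.lam ((fun b => Tm.app (.var 2) b)^[a] (.var 0)))
          ((fun b => Tm.app (.var 1) b)^[b] (.var 0))))))) := by
    have h : Red (Tm.app (.lam ((fun b => Tm.app (.var 2) b)^[b] (.var 0))) (.var 0))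
        (sub ((fun b => Tm.app (.var 2) b)^[b] (.var 0)) 0 (.var 0)) := Red.single Step.beta
    have e : sub ((fun b => Tm.app (.var 2) b)^[b] (.var 0)) 0 (.var 0)
        = (fun b => Tm.app (.var 1) b)^[b] (.var 0) := by
      simp only [sub_appIter,
        show sub (Tm.var 2) 0 (Tm.var 0) = Tm.var 1 from by simp [sub],
        show sub (Tm.var 0) 0 (Tm.var 0) = Tm.var 0 from rfl]
    rw [e] at h
    exact Red.lamC (Red.letBangR (Red.paraC (Red.lamC (Red.appR h))))
  -- step 8 : outer β
  have r8 : Red (Tm.lam (.letBang (.var 0)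
        (.para (.lam (.app (.lam ((fun b => Tm.app (.var 2) b)^[a] (.var 0)))
          ((fun b => Tm.app (.var 1) b)^[b] (.var 0)))))))
      (Tm.lam (.letBang (.var 0)
        (.para (.lam ((fun b => Tm.app (.var 1) b)^[a]
          ((fun b => Tm.app (.var 1) b)^[b] (.var 0))))))) := by
    have h : Red (Tm.app (.lam ((fun b => Tm.app (.var 2) b)^[a] (.var 0)))
          ((fun b => Tm.app (.var 1) b)^[b] (.var 0)))
        (sub ((fun b => Tm.app (.var 2) b)^[a] (.var 0)) 0
          ((fun b => Tm.app (.var 1) b)^[b] (.var 0))) := Red.single Step.beta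
    have e : sub ((fun b => Tm.app (.var 2) b)^[a] (.var 0)) 0
          ((fun b => Tm.app (.var 1) b)^[b] (.var 0))
        = (fun b => Tm.app (.var 1) b)^[a] ((fun b => Tm.app (.var 1) b)^[b] (.var 0)) := by
      simp only [sub_appIter,
        show sub (Tm.var 2) 0 ((fun b => Tm.app (.var 1) b)^[b] (.var 0)) = Tm.var 1 from by
          simp [sub],
        show sub (Tm.var 0) 0 ((fun b => Tm.app (.var 1) b)^[b] (.var 0))
            = (fun b => Tm.app (.var 1) b)^[b] (.var 0) from by
          simp only [sub, if_pos rfl]; exact rename_zero _]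
    rw [e] at h
    exact Red.lamC (Red.letBangR (Red.paraC (Red.lamC h)))
  have final : churchNat (a + b) = Tm.lam (.letBang (.var 0)
      (.para (.lam ((fun b => Tm.app (.var 1) b)^[a]
        ((fun b => Tm.app (.var 1) b)^[b] (.var 0)))))) := by
    rw [show churchNat (a + b) = .lam (.letBang (.var 0) (.para (.lam
        ((fun b => Tm.app (.var 1) b)^[a + b] (.var 0))))) from rfl,
      Function.iterate_add_apply]
  rw [final]
  exact ((((((Red.appL r1).trans' r2).trans' r3).trans' r4).trans' r5).trans' r6).trans'
    (r7.trans' r8)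
end LAL
namespace LAL
open Tm

theorem red_succ (a : ℕ) : Red (.app succTm (churchNat a)) (churchNat (a + 1)) := by
  have hca := vb_churchNat a
  have hadd := red_add a 1
  generalize hCa : churchNat a = Ca at hca hadd ⊢
  have h : Red (.app succTm Ca) (sub (addT (.var 0) oneTm) 0 Ca) := Red.single Step.beta
  have e : sub (addT (.var 0) oneTm) 0 Ca = addT Ca oneTm := by
    have : ∀ X, vb 0 X → sub (addT (.var 0) X) 0 Ca = addT Ca X := by
      intro X hX
      simp [addT, sub, sub_closed hX, sub_closed vb_addTm, rename_closed hca]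
    exact this oneTm vb_one
  rw [e] at h
  exact h.trans' hadd

theorem red_succIter (m : ℕ) : ∀ (a : ℕ),
    Red ((fun b => Tm.app succTm b)^[m] (churchNat a)) (churchNat (a + m)) := by
  induction m with
  | zero => intro a; rw [Nat.add_zero]; exact Red.rfl
  | succ m ih =>
      intro a
      rw [Function.iterate_succ_apply]
      refine (Red.appIter succTm (red_succ a) m).trans' ?_
      rw [show a + (m + 1) = (a + 1) + m by omega]
      exact ih (a + 1)

theorem red_numC (c : ℕ) : Red (numC c) (churchNat c) := by
  have h := red_succIter c 0
  rw [Nat.zero_add] at h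
  exact h

theorem red_sOne (a : ℕ) : Red (.app sTm (.bang (churchNat a))) (.bang (churchNat (a + 1))) := by
  have hca := vb_churchNat a
  have hadd := red_add a 1
  generalize hCa : churchNat a = Ca at hca hadd ⊢
  have hbca : vb 0 (Tm.bang Ca) := hca
  have h1 : Red (.app sTm (.bang Ca))
      (sub (.letBang (.var 0) (.bang (addT (.var 0) oneTm))) 0 (.bang Ca)) :=
    Red.single Step.beta
  have e1 : sub (.letBang (.var 0) (.bang (addT (.var 0) oneTm))) 0 (.bang Ca)
      = .letBang (.bang Ca) (.bang (addT (.var 0) oneTm)) := by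
    have : ∀ X, vb 0 X → sub (Tm.letBang (.var 0) (.bang (addT (.var 0) X))) 0 (.bang Ca)
        = .letBang (.bang Ca) (.bang (addT (.var 0) X)) := by
      intro X hX
      simp [addT, sub, sub_closed hX, sub_closed vb_addTm, rename_closed hbca]
    exact this oneTm vb_one
  rw [e1] at h1
  refine h1.trans' ?_
  have h2 : Red (Tm.letBang (.bang Ca) (.bang (addT (.var 0) oneTm)))
      (sub (.bang (addT (.var 0) oneTm)) 0 Ca) := Red.single Step.bang
  have e2 : sub (.bang (addT (.var 0) oneTm)) 0 Ca = .bang (addT Ca oneTm) := by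
    have : ∀ X, vb 0 X → sub (Tm.bang (addT (.var 0) X)) 0 Ca = .bang (addT Ca X) := by
      intro X hX
      simp [addT, sub, sub_closed hX, sub_closed vb_addTm, rename_closed hca]
    exact this oneTm vb_one
  rw [e2] at h2
  exact h2.trans' (Red.bangC hadd)

theorem red_sIter (m : ℕ) : ∀ (a : ℕ),
    Red ((fun b => Tm.app sTm b)^[m] (.bang (churchNat a))) (.bang (churchNat (a + m))) := by
  induction m with
  | zero => intro a; rw [Nat.add_zero]; exact Red.rfl
  | succ m ih =>
      intro a
      rw [Function.iterate_succ_apply]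
      refine (Red.appIter sTm (red_sOne a) m).trans' ?_
      rw [show a + (m + 1) = (a + 1) + m by omega]
      exact ih (a + 1)

theorem red_addStep (n a : ℕ) :
    Red (.app (addStep n) (churchNat a)) (churchNat (a + n)) := by
  show Red (.app (.lam (addT (.var 0) (churchNat n))) (churchNat a)) (churchNat (a + n))
  have hca := vb_churchNat a
  have hcn := vb_churchNat n
  have hadd := red_add a n
  generalize hCa : churchNat a = Ca at hca hadd ⊢
  generalize hCn : churchNat n = Cn at hcn hadd ⊢
  have h : Red (.app (.lam (addT (.var 0) Cn)) Ca) (sub (addT (.var 0) Cn) 0 Ca) :=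
    Red.single Step.beta
  have e : sub (addT (.var 0) Cn) 0 Ca = addT Ca Cn := by
    simp [addT, sub, sub_closed hcn, sub_closed vb_addTm, rename_closed hca]
  rw [e] at h
  exact h.trans' hadd

theorem red_addStepIter (n m : ℕ) : ∀ (a : ℕ),
    Red ((fun b => Tm.app (addStep n) b)^[m] (churchNat a)) (churchNat (a + m * n)) := by
  induction m with
  | zero => intro a; rw [Nat.zero_mul, Nat.add_zero]; exact Red.rfl
  | succ m ih =>
      intro a
      rw [Function.iterate_succ_apply]
      refine (Red.appIter (addStep n) (red_addStep n a) m).trans' ?_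
      rw [show a + (m + 1) * n = (a + n) + m * n by ring]
      exact ih (a + n)

theorem red_funPow_eval (n A a : ℕ) :
    Red (.app (funPow (addStep n) A) (churchNat a)) (churchNat (a + A * n)) :=
  (red_funPow_app (vb_addStep n) A _).trans' (red_addStepIter n A a)

theorem red_funPow_succ_eval (B a : ℕ) :
    Red (.app (funPow succTm B) (churchNat a)) (churchNat (a + B)) :=
  (red_funPow_app vb_succTm B _).trans' (red_succIter B a)

end LAL
namespace LAL
open Tm

theorem sub_var_lt (u : Tm) {n k : ℕ} (h : n < k) : sub (.var n) k u = .var n := by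
  unfold sub; rw [if_neg (by omega), if_neg (by omega)]

theorem vb_rename : ∀ (t : Tm) (k k' : ℕ) (f : ℕ → ℕ),
    (∀ n, n < k → f n < k') → vb k t → vb k' (rename f t)
  | .var n, k, k', f, hf, hv => by
      simp [vb, rename] at hv ⊢; exact hf n hv
  | .lam t, k, k', f, hf, hv => by
      simp only [rename]
      exact vb_rename t (k+1) (k'+1) _ (by
        intro n hn; cases n with
        | zero => simp [upRen]
        | succ m => simp only [upRen]; have := hf m (by omega); omega) hv
  | .app t u, k, k', f, hf, hv => by
      simp [vb, rename] at hv ⊢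
      exact ⟨vb_rename t k k' f hf hv.1, vb_rename u k k' f hf hv.2⟩
  | .bang t, k, k', f, hf, hv => vb_rename t k k' f hf hv
  | .letBang u t, k, k', f, hf, hv => by
      simp [vb, rename] at hv ⊢
      refine ⟨vb_rename u k k' f hf hv.1, vb_rename t (k+1) (k'+1) _ (by
        intro n hn; cases n with
        | zero => simp [upRen]
        | succ m => simp only [upRen]; have := hf m (by omega); omega) hv.2⟩
  | .para t, k, k', f, hf, hv => vb_rename t k k' f hf hv
  | .letPara u t, k, k', f, hf, hv => by
      simp [vb, rename] at hv ⊢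
      refine ⟨vb_rename u k k' f hf hv.1, vb_rename t (k+1) (k'+1) _ (by
        intro n hn; cases n with
        | zero => simp [upRen]
        | succ m => simp only [upRen]; have := hf m (by omega); omega) hv.2⟩

/-! ### The Horner tower -/

def psi : List ℕ → ℕ → Tm → Tm → Tm
  | [], c, h, _n => addT (.app h zeroTm) (numC c)
  | c' :: cs, c, h, n =>
      .letPara (.app n (.bang sTm))
        (.letPara (.app (addT (.app (rename (· + 1) h) zeroTm) (numC c)) (.bang succTm))
          (.para (.letBang (.app (.var 1) (.bang zeroTm))
            (.letPara (.app (.app (.var 1) zeroTm) (.bang (.lam (addT (.var 0) (.var 1)))))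
              (.para (psi cs c' (.var 0) (.var 1)))))))

theorem vb_psi : ∀ (cs : List ℕ) (c : ℕ) {m : ℕ} {h n : Tm},
    vb m h → vb m n → vb m (psi cs c h n)
  | [], c, m, h, n, hh, hn => by
      have hz := vb_mono _ 0 m (by omega) vb_zero
      have hnum := vb_mono _ 0 m (by omega) (vb_numC c)
      have ha := vb_mono _ 0 m (by omega) vb_addTm
      simp only [psi, addT, vb, Bool.and_eq_true, decide_eq_true_eq] at *
      and_intros <;> first | assumption | omega
  | c' :: cs, c, m, h, n, hh, hn => by
      have h1 : vb (m+1) (rename (· + 1) h) :=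
        vb_rename h m (m+1) _ (fun x hx => by omega) hh
      have hrec : vb (m+4) (psi cs c' (.var 0) (.var 1)) :=
        vb_psi cs c' (by simp only [vb, decide_eq_true_eq]; omega)
          (by simp only [vb, decide_eq_true_eq]; omega)
      have hz := vb_mono _ 0 (m+3) (by omega) vb_zero
      have hz1 := vb_mono _ 0 (m+1) (by omega) vb_zero
      have hz2 := vb_mono _ 0 (m+2) (by omega) vb_zero
      have hnum := vb_mono _ 0 (m+1) (by omega) (vb_numC c)
      have ha := vb_mono _ 0 (m+1) (by omega) vb_addTm
      have ha2 := vb_mono _ 0 (m+4) (by omega) vb_addTm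
      have hs := vb_mono _ 0 m (by omega) vb_sTm
      have hsc := vb_mono _ 0 (m+1) (by omega) vb_succTm
      simp only [psi, addT, vb, Bool.and_eq_true, decide_eq_true_eq] at *
      and_intros <;> first | assumption | omega |
        (first
          | exact hrec.1 | exact hrec.2
          | (repeat' constructor) <;> first | assumption | omega)

theorem vb_psi2 (cs : List ℕ) (c : ℕ) : vb 2 (psi cs c (.var 0) (.var 1)) :=
  vb_psi cs c (by decide) (by decide)

theorem sub_psi {u : Tm} (hu : vb 0 u) :
    ∀ (cs : List ℕ) (c : ℕ) (h n : Tm) (k : ℕ),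
      sub (psi cs c h n) k u = psi cs c (sub h k u) (sub n k u)
  | [], c, h, n, k => by
      simp only [psi, addT]
      have hA := vb_addTm; have hZ := vb_zero; have hN := vb_numC c
      generalize addTm = A at hA ⊢
      generalize zeroTm = Z at hZ ⊢
      generalize numC c = Nc at hN ⊢
      simp only [sub, sub_closed hA, sub_closed hZ, sub_closed hN]
  | c' :: cs, c, h, n, k => by
      simp only [psi, addT]
      have hA := vb_addTm; have hZ := vb_zero; have hS := vb_sTm
      have hSc := vb_succTm; have hN := vb_numC c
      have hP2 := vb_psi2 cs c'
      generalize addTm = A at hA ⊢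
      generalize zeroTm = Z at hZ ⊢
      generalize sTm = S at hS ⊢
      generalize succTm = Sc at hSc ⊢
      generalize numC c = Nc at hN ⊢
      generalize psi cs c' (.var 0) (.var 1) = Q at hP2 ⊢
      have hQ : ∀ (j : ℕ) (u' : Tm), 2 ≤ j → sub Q j u' = Q :=
        fun j u' hj => sub_vb Q 2 j u' hP2 hj
      simp (disch := omega) only [sub.eq_2, sub.eq_3, sub.eq_4, sub.eq_5, sub.eq_6,
        sub.eq_7, sub_var_lt, sub_closed hA, sub_closed hZ,
        sub_closed hS, sub_closed hSc, sub_closed hN, sub_rename1 hu, hQ]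
end LAL
namespace LAL
open Tm

theorem sub_var_eq (k : ℕ) (u : Tm) : sub (.var k) k u = rename (· + k) u := by
  unfold sub; rw [if_pos rfl]

theorem red_psi (n : ℕ) : ∀ (cs : List ℕ) (c A : ℕ),
    Red (psi cs c (funPow (addStep n) A) (churchNat n))
      ((Tm.para)^[2 * cs.length] (churchNat (List.foldl (fun a c => a * n + c) A (c :: cs))))
  | [], c, A => by
      have r1 : Red (.app (funPow (addStep n) A) zeroTm) (churchNat (A * n)) := by
        have h := red_funPow_eval n A 0
        rwa [Nat.zero_add] at h
      have r2 : Red (numC c) (churchNat c) := red_numC c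
      show Red (addT (.app (funPow (addStep n) A) zeroTm) (numC c)) _
      simp only [List.foldl_cons, List.foldl_nil, List.length_nil, Nat.mul_zero,
        Function.iterate_zero, id]
      exact ((Red.appL (Red.appR r1)).trans' (Red.appR r2)).trans' (red_add (A * n) c)
  | c' :: cs, c, A => by
      have hH : vb 0 (funPow (addStep n) A) := vb_funPow (vb_addStep n) A
      have hV : vb 0 (funPow sTm n) := vb_funPow vb_sTm n
      have hW : vb 0 (funPow succTm (A * n + c)) := vb_funPow vb_succTm _
      have hF : vb 0 (funPow (addStep n) (A * n + c)) := vb_funPow (vb_addStep n) _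
      have hcn := vb_churchNat n
      -- unfold psi and remove the rename
      rw [show psi (c' :: cs) c (funPow (addStep n) A) (churchNat n)
          = .letPara (.app (churchNat n) (.bang sTm))
            (.letPara (.app (addT (.app (funPow (addStep n) A) zeroTm) (numC c))
                (.bang succTm))
              (.para (.letBang (.app (.var 1) (.bang zeroTm))
                (.letPara (.app (.app (.var 1) zeroTm)
                    (.bang (.lam (addT (.var 0) (.var 1)))))
                  (.para (psi cs c' (.var 0) (.var 1))))))) from by
        simp only [psi]; rw [rename_closed hH]]
      -- r1 : coerce n
      have rc1 : Red (.app (churchNat n) (.bang sTm)) (.para (funPow sTm n)) := by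
        have h := red_church_app n sTm
        simp only [rename_closed vb_sTm] at h
        exact h
      -- e2 : the para step for G
      have e2 : sub (.letPara (.app (addT (.app (funPow (addStep n) A) zeroTm) (numC c))
              (.bang succTm))
            (.para (.letBang (.app (.var 1) (.bang zeroTm))
              (.letPara (.app (.app (.var 1) zeroTm)
                  (.bang (.lam (addT (.var 0) (.var 1)))))
                (.para (psi cs c' (.var 0) (.var 1))))))) 0 (funPow sTm n)
          = .letPara (.app (addT (.app (funPow (addStep n) A) zeroTm) (numC c))
              (.bang succTm))
            (.para (.letBang (.app (funPow sTm n) (.bang zeroTm))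
              (.letPara (.app (.app (.var 1) zeroTm)
                  (.bang (.lam (addT (.var 0) (.var 1)))))
                (.para (psi cs c' (.var 0) (.var 1)))))) := by
        have hP2 := vb_psi2 cs c'
        have hA0 := vb_addTm; have hZ := vb_zero; have hSc := vb_succTm
        have hN := vb_numC c
        simp only [addT]
        generalize funPow sTm n = V at hV ⊢
        generalize funPow (addStep n) A = H at hH ⊢
        generalize addTm = A0 at hA0 ⊢
        generalize zeroTm = Z at hZ ⊢
        generalize succTm = Sc at hSc ⊢
        generalize numC c = Nc at hN ⊢
        generalize psi cs c' (.var 0) (.var 1) = Q at hP2 ⊢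
        have hQ : ∀ (j : ℕ) (u' : Tm), 2 ≤ j → sub Q j u' = Q :=
          fun j u' hj => sub_vb Q 2 j u' hP2 hj
        simp (disch := omega) only [sub.eq_2, sub.eq_3, sub.eq_4, sub.eq_5, sub.eq_6,
          sub.eq_7, sub_var_lt, sub_var_eq, sub_closed hA0, sub_closed hZ,
          sub_closed hSc, sub_closed hN, sub_closed hH, sub_closed hV,
          rename_closed hV, hQ]
      -- r3 : evaluate the accumulator
      have rA1 : Red (.app (addT (.app (funPow (addStep n) A) zeroTm) (numC c))
            (.bang succTm))
          (.para (funPow succTm (A * n + c))) := by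
        have i1 : Red (.app (funPow (addStep n) A) zeroTm) (churchNat (A * n)) := by
          have h := red_funPow_eval n A 0
          rwa [Nat.zero_add] at h
        have rX : Red (addT (.app (funPow (addStep n) A) zeroTm) (numC c))
            (churchNat (A * n + c)) :=
          ((Red.appL (Red.appR i1)).trans' (Red.appR (red_numC c))).trans'
            (red_add (A * n) c)
        have h := red_church_app (A * n + c) succTm
        simp only [rename_closed vb_succTm] at h
        exact (Red.appL rX).trans' h
      -- e4
      have e4 : sub (.para (.letBang (.app (funPow sTm n) (.bang zeroTm))
            (.letPara (.app (.app (.var 1) zeroTm)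
                (.bang (.lam (addT (.var 0) (.var 1)))))
              (.para (psi cs c' (.var 0) (.var 1)))))) 0 (funPow succTm (A * n + c))
          = .para (.letBang (.app (funPow sTm n) (.bang zeroTm))
            (.letPara (.app (.app (funPow succTm (A * n + c)) zeroTm)
                (.bang (.lam (addT (.var 0) (.var 1)))))
              (.para (psi cs c' (.var 0) (.var 1))))) := by
        have hP2 := vb_psi2 cs c'
        have hA0 := vb_addTm; have hZ := vb_zero
        simp only [addT]
        generalize funPow sTm n = V at hV ⊢
        generalize funPow succTm (A * n + c) = W at hW ⊢
        generalize addTm = A0 at hA0 ⊢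
        generalize zeroTm = Z at hZ ⊢
        generalize psi cs c' (.var 0) (.var 1) = Q at hP2 ⊢
        have hQ : ∀ (j : ℕ) (u' : Tm), 2 ≤ j → sub Q j u' = Q :=
          fun j u' hj => sub_vb Q 2 j u' hP2 hj
        simp (disch := omega) only [sub.eq_2, sub.eq_3, sub.eq_4, sub.eq_5, sub.eq_6,
          sub.eq_7, sub_var_lt, sub_var_eq, sub_closed hA0, sub_closed hZ,
          sub_closed hV, sub_closed hW, rename_closed hW, hQ]
      -- r5 : produce !n
      have r5 : Red (.app (funPow sTm n) (.bang zeroTm)) (.bang (churchNat n)) := by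
        have h := red_sIter n 0
        rw [Nat.zero_add] at h
        exact (red_funPow_app vb_sTm n (.bang zeroTm)).trans' h
      -- e6
      have e6 : sub (.letPara (.app (.app (funPow succTm (A * n + c)) zeroTm)
              (.bang (.lam (addT (.var 0) (.var 1)))))
            (.para (psi cs c' (.var 0) (.var 1)))) 0 (churchNat n)
          = .letPara (.app (.app (funPow succTm (A * n + c)) zeroTm)
              (.bang (.lam (addT (.var 0) (churchNat n)))))
            (.para (psi cs c' (.var 0) (churchNat n))) := by
        have hA0 := vb_addTm; have hZ := vb_zero
        simp only [addT]
        generalize hgn : churchNat n = Cn at hcn ⊢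
        generalize funPow succTm (A * n + c) = W at hW ⊢
        generalize addTm = A0 at hA0 ⊢
        generalize zeroTm = Z at hZ ⊢
        simp (disch := omega) only [sub.eq_2, sub.eq_3, sub.eq_4, sub.eq_5, sub.eq_6,
          sub.eq_7, sub_var_lt, sub_var_eq, sub_closed hA0, sub_closed hZ,
          sub_closed hW, rename_closed hcn, sub_psi hcn]
      -- r7
      have r7 : Red (.app (.app (funPow succTm (A * n + c)) zeroTm)
            (.bang (.lam (addT (.var 0) (churchNat n)))))
          (.para (funPow (addStep n) (A * n + c))) := by
        have i1 : Red (.app (funPow succTm (A * n + c)) zeroTm)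
            (churchNat (A * n + c)) := by
          have h := red_funPow_succ_eval (A * n + c) 0
          rwa [Nat.zero_add] at h
        have h := red_church_app (A * n + c) (addStep n)
        simp only [rename_closed (vb_addStep n)] at h
        exact (Red.appL i1).trans' h
      -- e8
      have e8 : sub (.para (psi cs c' (.var 0) (churchNat n))) 0
            (funPow (addStep n) (A * n + c))
          = .para (psi cs c' (funPow (addStep n) (A * n + c)) (churchNat n)) := by
        generalize hgn : churchNat n = Cn at hcn ⊢
        generalize funPow (addStep n) (A * n + c) = F at hF ⊢
        simp only [sub.eq_6, sub_psi hF, sub_var_eq, rename_zero, rename_closed hF,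
          sub_closed hcn]
      -- the inner chain
      have inner : Red (.letBang (.app (funPow sTm n) (.bang zeroTm))
            (.letPara (.app (.app (funPow succTm (A * n + c)) zeroTm)
                (.bang (.lam (addT (.var 0) (.var 1)))))
              (.para (psi cs c' (.var 0) (.var 1)))))
          (.para (psi cs c' (funPow (addStep n) (A * n + c)) (churchNat n))) := by
        refine (Red.letBangL r5).trans' ?_
        have s6 : Red (Tm.letBang (.bang (churchNat n))
              (.letPara (.app (.app (funPow succTm (A * n + c)) zeroTm)
                  (.bang (.lam (addT (.var 0) (.var 1)))))
                (.para (psi cs c' (.var 0) (.var 1))))) _ := Red.single Step.bang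
        rw [e6] at s6
        refine s6.trans' ?_
        refine (Red.letParaL r7).trans' ?_
        have s8 : Red (Tm.letPara (.para (funPow (addStep n) (A * n + c)))
            (.para (psi cs c' (.var 0) (churchNat n)))) _ := Red.single Step.para
        rw [e8] at s8
        exact s8
      -- assemble
      have s2 : Red (Tm.letPara (.para (funPow sTm n))
          (.letPara (.app (addT (.app (funPow (addStep n) A) zeroTm) (numC c))
              (.bang succTm))
            (.para (.letBang (.app (.var 1) (.bang zeroTm))
              (.letPara (.app (.app (.var 1) zeroTm)
                  (.bang (.lam (addT (.var 0) (.var 1)))))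
                (.para (psi cs c' (.var 0) (.var 1)))))))) _ := Red.single Step.para
      rw [e2] at s2
      have s4 : Red (Tm.letPara (.para (funPow succTm (A * n + c)))
          (.para (.letBang (.app (funPow sTm n) (.bang zeroTm))
            (.letPara (.app (.app (.var 1) zeroTm)
                (.bang (.lam (addT (.var 0) (.var 1)))))
              (.para (psi cs c' (.var 0) (.var 1))))))) _ := Red.single Step.para
      rw [e4] at s4
      have ih := red_psi n cs c' (A * n + c)
      have whole := ((((Red.letParaL rc1).trans' s2).trans' (Red.letParaL rA1)).trans'
        s4).trans' (Red.paraC (inner.trans' (Red.paraC ih)))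
      rw [show (2 : ℕ) * (c' :: cs).length = 2 * cs.length + 1 + 1 by
          simp [List.length_cons]; ring,
        Function.iterate_succ_apply', Function.iterate_succ_apply',
        List.foldl_cons]
      exact whole
end LAL
namespace LAL
open Tm

/-- The polynomial term: coefficients `cD`, then `c :: cs` (degree-descending). -/
def tP (cD : ℕ) (c : ℕ) (cs : List ℕ) : Tm :=
  .lam (.letPara (.app (.var 0) (.bang sTm))
    (.para (.letBang (.app (.var 0) (.bang zeroTm))
      (.letPara (.app (numC cD) (.bang (.lam (addT (.var 0) (.var 1)))))
        (.para (psi cs c (.var 0) (.var 1)))))))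

theorem red_tP (cD c : ℕ) (cs : List ℕ) (n : ℕ) :
    Red (.app (tP cD c cs) (churchNat n))
      ((Tm.para)^[2 * cs.length + 1 + 1]
        (churchNat (List.foldl (fun a c => a * n + c) cD (c :: cs)))) := by
  have hcn := vb_churchNat n
  have hV : vb 0 (funPow sTm n) := vb_funPow vb_sTm n
  have hF : vb 0 (funPow (addStep n) cD) := vb_funPow (vb_addStep n) cD
  -- β
  have s1 : Red (.app (tP cD c cs) (churchNat n))
      (sub (.letPara (.app (.var 0) (.bang sTm))
        (.para (.letBang (.app (.var 0) (.bang zeroTm))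
          (.letPara (.app (numC cD) (.bang (.lam (addT (.var 0) (.var 1)))))
            (.para (psi cs c (.var 0) (.var 1))))))) 0 (churchNat n)) :=
    Red.single Step.beta
  have e1 : (sub (.letPara (.app (.var 0) (.bang sTm))
        (.para (.letBang (.app (.var 0) (.bang zeroTm))
          (.letPara (.app (numC cD) (.bang (.lam (addT (.var 0) (.var 1)))))
            (.para (psi cs c (.var 0) (.var 1))))))) 0 (churchNat n))
      = .letPara (.app (churchNat n) (.bang sTm))
        (.para (.letBang (.app (.var 0) (.bang zeroTm))
          (.letPara (.app (numC cD) (.bang (.lam (addT (.var 0) (.var 1)))))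
            (.para (psi cs c (.var 0) (.var 1)))))) := by
    have hP2 := vb_psi2 cs c
    have hA0 := vb_addTm; have hZ := vb_zero; have hS := vb_sTm
    have hN := vb_numC cD
    simp only [addT]
    generalize hgn : churchNat n = Cn at hcn ⊢
    generalize addTm = A0 at hA0 ⊢
    generalize zeroTm = Z at hZ ⊢
    generalize sTm = S at hS ⊢
    generalize numC cD = Nc at hN ⊢
    generalize psi cs c (.var 0) (.var 1) = Q at hP2 ⊢
    have hQ : ∀ (j : ℕ) (u' : Tm), 2 ≤ j → sub Q j u' = Q :=
      fun j u' hj => sub_vb Q 2 j u' hP2 hj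
    simp (disch := omega) only [sub.eq_2, sub.eq_3, sub.eq_4, sub.eq_5, sub.eq_6,
      sub.eq_7, sub_var_lt, sub_var_eq, sub_closed hA0, sub_closed hZ,
      sub_closed hS, sub_closed hN, rename_zero, rename_closed hcn, hQ]
  rw [e1] at s1
  -- coerce n
  have rc1 : Red (.app (churchNat n) (.bang sTm)) (.para (funPow sTm n)) := by
    have h := red_church_app n sTm
    simp only [rename_closed vb_sTm] at h
    exact h
  -- para step for G
  have s3 : Red (Tm.letPara (.para (funPow sTm n))
      (.para (.letBang (.app (.var 0) (.bang zeroTm))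
        (.letPara (.app (numC cD) (.bang (.lam (addT (.var 0) (.var 1)))))
          (.para (psi cs c (.var 0) (.var 1))))))) _ := Red.single Step.para
  have e3 : (sub (.para (.letBang (.app (.var 0) (.bang zeroTm))
        (.letPara (.app (numC cD) (.bang (.lam (addT (.var 0) (.var 1)))))
          (.para (psi cs c (.var 0) (.var 1)))))) 0 (funPow sTm n))
      = .para (.letBang (.app (funPow sTm n) (.bang zeroTm))
        (.letPara (.app (numC cD) (.bang (.lam (addT (.var 0) (.var 1)))))
          (.para (psi cs c (.var 0) (.var 1))))) := by
    have hP2 := vb_psi2 cs c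
    have hA0 := vb_addTm; have hZ := vb_zero
    have hN := vb_numC cD
    simp only [addT]
    generalize funPow sTm n = V at hV ⊢
    generalize addTm = A0 at hA0 ⊢
    generalize zeroTm = Z at hZ ⊢
    generalize numC cD = Nc at hN ⊢
    generalize psi cs c (.var 0) (.var 1) = Q at hP2 ⊢
    have hQ : ∀ (j : ℕ) (u' : Tm), 2 ≤ j → sub Q j u' = Q :=
      fun j u' hj => sub_vb Q 2 j u' hP2 hj
    simp (disch := omega) only [sub.eq_2, sub.eq_3, sub.eq_4, sub.eq_5, sub.eq_6,
      sub.eq_7, sub_var_lt, sub_var_eq, sub_closed hA0, sub_closed hZ,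
      sub_closed hN, rename_zero, rename_closed hV, hQ]
  rw [e3] at s3
  -- r5
  have r5 : Red (.app (funPow sTm n) (.bang zeroTm)) (.bang (churchNat n)) := by
    have h := red_sIter n 0
    rw [Nat.zero_add] at h
    exact (red_funPow_app vb_sTm n (.bang zeroTm)).trans' h
  -- bang step
  have s6 : Red (Tm.letBang (.bang (churchNat n))
      (.letPara (.app (numC cD) (.bang (.lam (addT (.var 0) (.var 1)))))
        (.para (psi cs c (.var 0) (.var 1))))) _ := Red.single Step.bang
  have e6 : (sub (.letPara (.app (numC cD) (.bang (.lam (addT (.var 0) (.var 1)))))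
        (.para (psi cs c (.var 0) (.var 1)))) 0 (churchNat n))
      = .letPara (.app (numC cD) (.bang (.lam (addT (.var 0) (churchNat n)))))
        (.para (psi cs c (.var 0) (churchNat n))) := by
    have hA0 := vb_addTm
    have hN := vb_numC cD
    simp only [addT]
    generalize hgn : churchNat n = Cn at hcn ⊢
    generalize addTm = A0 at hA0 ⊢
    generalize numC cD = Nc at hN ⊢
    simp (disch := omega) only [sub.eq_2, sub.eq_3, sub.eq_4, sub.eq_5, sub.eq_6,
      sub.eq_7, sub_var_lt, sub_var_eq, sub_closed hA0, sub_closed hN,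
      rename_closed hcn, sub_psi hcn]
  rw [e6] at s6
  -- r7
  have r7 : Red (.app (numC cD) (.bang (.lam (addT (.var 0) (churchNat n)))))
      (.para (funPow (addStep n) cD)) := by
    have h := red_church_app cD (addStep n)
    simp only [rename_closed (vb_addStep n)] at h
    exact (Red.appL (red_numC cD)).trans' h
  -- para step for h
  have s8 : Red (Tm.letPara (.para (funPow (addStep n) cD))
      (.para (psi cs c (.var 0) (churchNat n)))) _ := Red.single Step.para
  have e8 : (sub (.para (psi cs c (.var 0) (churchNat n))) 0 (funPow (addStep n) cD))
      = .para (psi cs c (funPow (addStep n) cD) (churchNat n)) := by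
    generalize hgn : churchNat n = Cn at hcn ⊢
    generalize funPow (addStep n) cD = F at hF ⊢
    simp only [sub.eq_6, sub_psi hF, sub_var_eq, rename_zero, rename_closed hF,
      sub_closed hcn]
  rw [e8] at s8
  have ih := red_psi n cs c cD
  have inner : Red (.letBang (.app (funPow sTm n) (.bang zeroTm))
      (.letPara (.app (numC cD) (.bang (.lam (addT (.var 0) (.var 1)))))
        (.para (psi cs c (.var 0) (.var 1)))))
      ((Tm.para)^[2 * cs.length + 1]
        (churchNat (List.foldl (fun a c => a * n + c) cD (c :: cs)))) := by
    rw [Function.iterate_succ_apply']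
    exact (((Red.letBangL r5).trans' s6).trans' (Red.letParaL r7)).trans'
      (s8.trans' (Red.paraC ih))
  rw [show 2 * cs.length + 1 + 1 = (2 * cs.length + 1) + 1 by omega,
    Function.iterate_succ_apply']
  exact ((s1.trans' (Red.letParaL rc1)).trans' s3).trans' (Red.paraC inner)
end LAL
namespace LAL
open Tm

/-! ### Typing helpers -/

theorem Tj.cast {Γ : List (Mark × Ty)} {t t' : Tm} {A : Ty}
    (h : Tj Γ t A) (e : t = t') : Tj Γ t' A := e ▸ h

theorem Tj.weak1 {a e : Mark × Ty} {t : Tm} {A : Ty}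
    (hv : vb 1 t) (h : Tj [a] t A) : Tj [a, e] t A := by
  have h2 := Tj.weak e h
  have h3 := Tj.exch (Γ := []) (Δ := ([] : List (Mark × Ty))) (a := e) (b := a) h2
  refine h3.cast ?_
  rw [rename_comp]
  rw [rename_vb t 1 _ id hv ?_]
  · exact rename_id t id fun _ => rfl
  · intro n hn
    interval_cases n
    simp [swapF]

/-- instantiate a tally integer at type `B` -/
theorem Tj.natElim {Γ : List (Mark × Ty)} {t : Tm} (B : Ty) (h : Tj Γ t natTy) :
    Tj Γ t (.lolli (.bang (.lolli B B)) (.para (.lolli B B))) := by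
  have h2 := Tj.allE (A := .lolli (.bang (.lolli (.tvar 0) (.tvar 0)))
    (.para (.lolli (.tvar 0) (.tvar 0)))) B h
  simpa [substTy] using h2

/-- the N-type instantiated with a type variable -/
def tyF : Ty := .lolli (.tvar 0) (.tvar 0)

/-! ### Typing of the gadgets -/

theorem tj_zero : Tj [] zeroTm natTy := by
  have d1 : Tj [(.pl, Ty.tvar 0)] (.var 0) (.tvar 0) := Tj.ax _
  have d2 : Tj [(.pl, Ty.tvar 0), (.pl, tyF)] (.var 0) (.tvar 0) :=
    Tj.weak1 (by decide) d1
  have d3 : Tj [(.pl, tyF)] (.lam (.var 0)) tyF := Tj.lam d2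
  have d4 : Tj [(.db, tyF)] (.para (.lam (.var 0))) (.para tyF) :=
    Tj.paraI d3 (by intro e he; simp [List.mem_cons] at he; rw [he])
      (.cons ⟨rfl, by decide⟩ .nil)
  have d5 : Tj [(.pl, .bang tyF)] (.var 0) (.bang tyF) := Tj.ax _
  have d6 := Tj.bangE (Γ := []) d5 d4
  have d7 : Tj [] (.lam (.letBang (.var 0) (.para (.lam (.var 0)))))
      (.lolli (.bang tyF) (.para tyF)) := Tj.lam d6
  exact Tj.allI (Γ := []) d7

theorem tj_one : Tj [] oneTm natTy := by
  have a1 : Tj [(.pl, tyF)] (.var 0) tyF := Tj.ax _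
  have a2 : Tj [(.pl, Ty.tvar 0)] (.var 0) (.tvar 0) := Tj.ax _
  have a3 : Tj [(.pl, tyF), (.pl, .tvar 0)] (.app (.var 0) (.var 1)) (.tvar 0) :=
    Tj.app (Γ := [(.pl, tyF)]) a1 a2
  have a4 : Tj [(.pl, Ty.tvar 0), (.pl, tyF)] (.app (.var 1) (.var 0)) (.tvar 0) :=
    Tj.exch (Γ := []) (Δ := []) a3
  have a5 : Tj [(.pl, tyF)] (.lam (.app (.var 1) (.var 0))) tyF := Tj.lam a4
  have a6 : Tj [(.db, tyF)] (.para (.lam (.app (.var 1) (.var 0)))) (.para tyF) :=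
    Tj.paraI a5 (by intro e he; simp [List.mem_cons] at he; rw [he])
      (.cons ⟨rfl, by decide⟩ .nil)
  have a7 : Tj [(.pl, .bang tyF)] (.var 0) (.bang tyF) := Tj.ax _
  have a8 := Tj.bangE (Γ := []) a7 a6
  have a9 : Tj [] (.lam (.letBang (.var 0) (.para (.lam (.app (.var 1) (.var 0))))))
      (.lolli (.bang tyF) (.para tyF)) := Tj.lam a8
  exact Tj.allI (Γ := []) a9
end LAL
namespace LAL
open Tm

theorem tj_add : Tj [] addTm (.lolli natTy (.lolli natTy natTy)) := by
  have i1 : Tj [(.pl, tyF)] (.var 0) tyF := Tj.ax _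
  have i2 : Tj [(.pl, Ty.tvar 0)] (.var 0) (.tvar 0) := Tj.ax _
  have i3 := Tj.app (Γ := [(.pl, tyF)]) (Δ := [(.pl, .tvar 0)]) i1 i2
  have i4 := Tj.app (Γ := [(.pl, tyF)]) (Δ := [(.pl, tyF), (.pl, .tvar 0)]) i1 i3
  have i5 := Tj.exch (Γ := [(.pl, tyF)]) (Δ := []) (a := (.pl, tyF))
    (b := (.pl, .tvar 0)) i4
  have i6 := Tj.exch (Γ := []) (Δ := [(.pl, tyF)]) (a := (.pl, tyF))
    (b := (.pl, .tvar 0)) i5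
  have i7 := Tj.exch (Γ := [(.pl, .tvar 0)]) (Δ := []) (a := (.pl, tyF))
    (b := (.pl, tyF)) i6
  have i8 := Tj.lam i7
  have i9 := Tj.paraI (Γ' := [(.dp, tyF), (.dp, tyF)]) i8
    (by intro e he
        cases he with
        | head => rfl
        | tail _ he =>
          cases he with
          | head => rfl
          | tail _ he => cases he)
    (.cons ⟨rfl, by decide⟩ (.cons ⟨rfl, by decide⟩ .nil))
  have j1 : Tj [(.pl, natTy)] (.var 0) natTy := Tj.ax _
  have j2 := Tj.natElim (.tvar 0) j1
  have j4 := Tj.bangI₁ i1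
  have j5 := Tj.app (Γ := [(.pl, natTy)]) (Δ := [(.db, tyF)]) j2 j4
  have p3 := Tj.paraE (Γ := [(.dp, tyF)]) (Δ := [(.pl, natTy), (.db, tyF)]) j5 i9
  have p6 := Tj.paraE (Γ := [(.pl, natTy), (.db, tyF)])
    (Δ := [(.pl, natTy), (.db, tyF)]) j5 p3
  have s1 := Tj.exch (Γ := []) (Δ := [(.pl, natTy), (.db, tyF)])
    (a := (.pl, natTy)) (b := (.db, tyF)) p6
  have s2 := Tj.exch (Γ := [(.db, tyF), (.pl, natTy)]) (Δ := [])
    (a := (.pl, natTy)) (b := (.db, tyF)) s1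
  have s3 := Tj.exch (Γ := [(.db, tyF)]) (Δ := [(.pl, natTy)])
    (a := (.pl, natTy)) (b := (.db, tyF)) s2
  have s4 := Tj.cntr s3
  have k1 : Tj [(.pl, .bang tyF)] (.var 0) (.bang tyF) := Tj.ax _
  have k2 := Tj.bangE (Γ := [(.pl, natTy), (.pl, natTy)]) (Δ := [(.pl, .bang tyF)]) k1 s4
  have e1 := Tj.exch (Γ := [(.pl, natTy)]) (Δ := []) (a := (.pl, natTy))
    (b := (.pl, .bang tyF)) k2
  have e2 := Tj.exch (Γ := []) (Δ := [(.pl, natTy)]) (a := (.pl, natTy))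
    (b := (.pl, .bang tyF)) e1
  have l1 := Tj.lam e2
  have l2 := Tj.allI (Γ := [(.pl, natTy), (.pl, natTy)]) l1
  exact Tj.lam (Tj.lam l2)
end LAL
namespace LAL
open Tm

theorem tj_succ : Tj [] succTm (.lolli natTy natTy) := by
  have s2 : Tj [(.pl, natTy)] (.var 0) natTy := Tj.ax _
  have s3 := Tj.app (Γ := []) (Δ := [(.pl, natTy)]) tj_add s2
  have s5 := Tj.app (Γ := [(.pl, natTy)]) (Δ := []) s3 tj_one
  exact Tj.lam s5

theorem tj_sTm : Tj [] sTm (.lolli (.bang natTy) (.bang natTy)) := by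
  have s2 : Tj [(.pl, natTy)] (.var 0) natTy := Tj.ax _
  have s3 := Tj.app (Γ := []) (Δ := [(.pl, natTy)]) tj_add s2
  have s5 := Tj.app (Γ := [(.pl, natTy)]) (Δ := []) s3 tj_one
  have t2 := Tj.bangI₁ s5
  have t3 : Tj [(.pl, .bang natTy)] (.var 0) (.bang natTy) := Tj.ax _
  have t4 := Tj.bangE (Γ := []) (Δ := [(.pl, .bang natTy)]) t3 t2
  exact Tj.lam t4

theorem tj_numC (c : ℕ) : Tj [] (numC c) natTy := by
  induction c with
  | zero => exact tj_zero
  | succ c ih =>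
      have h := Tj.app (Γ := []) (Δ := []) tj_succ ih
      rw [show numC (c+1) = .app succTm (numC c) from by
        unfold numC; rw [Function.iterate_succ_apply']]
      exact h.cast (congrArg _ (rename_closed (vb_numC c) _))

theorem plainPair {A B : Ty} :
    ∀ e ∈ [((Mark.pl, A) : Mark × Ty), (Mark.pl, B)], e.1 = Mark.pl := by
  intro e he
  cases he with
  | head => rfl
  | tail _ he =>
    cases he with
    | head => rfl
    | tail _ he => cases he

theorem rename_pred_shift (X : Tm) : rename Nat.pred (rename (· + 1) X) = X := by
  rw [rename_comp]; exact rename_id _ _ (fun n => rfl)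

theorem rename_pred_letPara (M X : Tm) (hX : vb 2 X) :
    rename Nat.pred (.letPara (rename (· + 1) M) (.para X))
      = .letPara M (.para X) := by
  show Tm.letPara (rename Nat.pred (rename (· + 1) M))
      (.para (rename (upRen Nat.pred) X)) = _
  rw [rename_pred_shift]
  have e : rename (upRen Nat.pred) X = X := by
    rw [rename_vb X 2 _ id hX ?_]
    · exact rename_id X id fun _ => rfl
    · intro n hn; interval_cases n <;> rfl
  rw [e]

theorem Tj.paraE' {Γ Δ : List (Mark × Ty)} {u u' t : Tm} {A C : Ty}
    (hu : Tj Δ u (.para A)) (ht : Tj ((.dp, A) :: Γ) t C)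
    (e : rename (· + Γ.length) u = u') : Tj (Γ ++ Δ) (.letPara u' t) C := by
  have h := Tj.paraE hu ht; rwa [e] at h

def paraN : ℕ → Ty → Ty
  | 0, A => A
  | k+1, A => .para (paraN k A)

theorem paraN_eq (k : ℕ) (A : Ty) : paraN k A = (Ty.para)^[k] A := by
  induction k with
  | zero => rfl
  | succ k ih => rw [Function.iterate_succ_apply', ← ih]; rfl
end LAL
namespace LAL
open Tm

theorem tj_psi : ∀ (cs : List ℕ) (c : ℕ),
    Tj [(.pl, .lolli natTy natTy), (.pl, natTy)] (psi cs c (.var 0) (.var 1))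
      (paraN (2 * cs.length) natTy)
  | [], c => by
      have b1 : Tj [(.pl, .lolli natTy natTy)] (.var 0) (.lolli natTy natTy) := Tj.ax _
      have b3 := Tj.app (Γ := [(.pl, .lolli natTy natTy)]) (Δ := []) b1 tj_zero
      have b5 := Tj.app (Γ := []) (Δ := [(.pl, .lolli natTy natTy)]) tj_add b3
      have b6 := (Tj.app (Γ := [(.pl, .lolli natTy natTy)]) (Δ := []) b5 (tj_numC c)).cast
        (congrArg _ (rename_closed (vb_numC c) _))
      have h0 := vb_mono _ 0 1 (by omega) (vb_numC c)
      have hb : vb 1 (.app (.app addTm (.app (.var 0) zeroTm)) (numC c)) := by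
        simp [vb, h0, vb_mono _ 0 1 (by omega) vb_addTm, vb_mono _ 0 1 (by omega) vb_zero]
      exact Tj.weak1 hb b6
  | c' :: cs, c => by
      have ih := tj_psi cs c'
      have u2 := Tj.paraI (Γ' := [(.dp, .lolli natTy natTy), (.db, natTy)]) ih
        plainPair (.cons ⟨rfl, by decide⟩ (.cons ⟨rfl, by decide⟩ .nil))
      -- the mult judgment M₀ in context [x, g]
      have m1 : Tj [(.pl, .lolli natTy natTy)] (.var 0) (.lolli natTy natTy) := Tj.ax _
      have m2 := Tj.app (Γ := [(.pl, .lolli natTy natTy)]) (Δ := []) m1 tj_zero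
      have m3 := Tj.natElim natTy m2
      have step1 : Tj [(.pl, natTy)] (.var 0) natTy := Tj.ax _
      have step2 := Tj.app (Γ := []) (Δ := [(.pl, natTy)]) tj_add step1
      have step3 := Tj.app (Γ := [(.pl, natTy)]) (Δ := [(.pl, natTy)]) step2 step1
      have step4 := Tj.lam step3
      have m5 := Tj.bangI₁ step4
      have m6 := Tj.app (Γ := [(.pl, .lolli natTy natTy)]) (Δ := [(.db, natTy)]) m3 m5
      have m7 := Tj.exch (Γ := []) (Δ := []) (a := (.pl, .lolli natTy natTy))
        (b := (.db, natTy)) m6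
      -- x-level letPara, contraction
      have u3 := Tj.paraE (Γ := [(.db, natTy)])
        (Δ := [(.db, natTy), (.pl, .lolli natTy natTy)]) m7 u2
      have u4 := (Tj.cntr u3).cast
        (show rename Nat.pred (.letPara (rename (· + 1)
            (.app (.app (.var 1) zeroTm)
              (.bang (.lam (.app (.app addTm (.var 0)) (.var 1))))))
            (.para (psi cs c' (.var 0) (.var 1)))) = _ from
          rename_pred_letPara _ _ (vb_psi2 cs c'))
      -- the letBang for x
      have x1 : Tj [(.pl, .lolli (.bang natTy) (.bang natTy))] (.var 0)
          (.lolli (.bang natTy) (.bang natTy)) := Tj.ax _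
      have x2 := Tj.bangI₀ tj_zero
      have x3 := Tj.app (Γ := [(.pl, .lolli (.bang natTy) (.bang natTy))]) (Δ := []) x1 x2
      have u5 := Tj.bangE (Γ := [(.pl, .lolli natTy natTy)])
        (Δ := [(.pl, .lolli (.bang natTy) (.bang natTy))]) x3 u4
      have u6 := Tj.paraI (Γ' := [(.dp, .lolli natTy natTy),
          (.dp, .lolli (.bang natTy) (.bang natTy))]) u5
        plainPair (.cons ⟨rfl, by decide⟩ (.cons ⟨rfl, by decide⟩ .nil))
      -- the accumulator judgment A₁ in context [h]
      have z1 : Tj [(.pl, .lolli natTy natTy)] (.var 0) (.lolli natTy natTy) := Tj.ax _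
      have z2 := Tj.app (Γ := [(.pl, .lolli natTy natTy)]) (Δ := []) z1 tj_zero
      have z3 := Tj.app (Γ := []) (Δ := [(.pl, .lolli natTy natTy)]) tj_add z2
      have z4 := (Tj.app (Γ := [(.pl, .lolli natTy natTy)]) (Δ := []) z3 (tj_numC c)).cast
        (congrArg _ (rename_closed (vb_numC c) _))
      have z5 := Tj.natElim natTy z4
      have z6 := Tj.bangI₀ tj_succ
      have z7 := Tj.app (Γ := [(.pl, .lolli natTy natTy)]) (Δ := []) z5 z6
      -- second letPara
      have w1 := Tj.paraE' (Γ := [(.dp, .lolli (.bang natTy) (.bang natTy))])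
        (Δ := [(.pl, .lolli natTy natTy)]) z7 u6
        (by show rename (· + 1)
              (.app (.app (.app addTm (.app (.var 0) zeroTm)) (numC c)) (.bang succTm))
            = (.app (.app (.app addTm (.app (.var 1) zeroTm)) (numC c))
                (.bang succTm) : Tm)
            show Tm.app (.app (.app (rename (· + 1) addTm)
                (.app (rename (· + 1) (.var 0)) (rename (· + 1) zeroTm)))
                (rename (· + 1) (numC c))) (.bang (rename (· + 1) succTm)) = _
            rw [rename_closed vb_addTm, rename_closed vb_zero,
              rename_closed (vb_numC c), rename_closed vb_succTm]
            exact rfl)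
      -- the coercion judgment A₂ in context [n]
      have y1 : Tj [(.pl, natTy)] (.var 0) natTy := Tj.ax _
      have y2 := Tj.natElim (.bang natTy) y1
      have y3 := Tj.bangI₀ tj_sTm
      have y4 := Tj.app (Γ := [(.pl, natTy)]) (Δ := []) y2 y3
      -- outer letPara
      exact Tj.paraE (Γ := [(.pl, .lolli natTy natTy)]) (Δ := [(.pl, natTy)]) y4 w1
end LAL
namespace LAL
open Tm

theorem plainOne {A : Ty} : ∀ e ∈ [((Mark.pl, A) : Mark × Ty)], e.1 = Mark.pl := by
  intro e he
  cases he with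
  | head => rfl
  | tail _ he => cases he

theorem tj_tP (cD c : ℕ) (cs : List ℕ) :
    Tj [] (tP cD c cs) (.lolli natTy (paraN (2 * cs.length + 2) natTy)) := by
  have hψ := tj_psi cs c
  have v2 := Tj.paraI (Γ' := [(.dp, .lolli natTy natTy), (.db, natTy)]) hψ
    plainPair (.cons ⟨rfl, by decide⟩ (.cons ⟨rfl, by decide⟩ .nil))
  -- the top mult judgment, context [x]
  have step1 : Tj [(.pl, natTy)] (.var 0) natTy := Tj.ax _
  have step2 := Tj.app (Γ := []) (Δ := [(.pl, natTy)]) tj_add step1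
  have step3 := Tj.app (Γ := [(.pl, natTy)]) (Δ := [(.pl, natTy)]) step2 step1
  have step4 := Tj.lam step3
  have m5 := Tj.bangI₁ step4
  have mt := Tj.app (Γ := []) (Δ := [(.db, natTy)])
    (Tj.natElim natTy (tj_numC cD)) m5
  have v3 := Tj.paraE (Γ := [(.db, natTy)]) (Δ := [(.db, natTy)]) mt v2
  have v4 := (Tj.cntr v3).cast
    (show rename Nat.pred (.letPara (rename (· + 1)
        (.app (numC cD) (.bang (.lam (.app (.app addTm (.var 0)) (.var 1))))))
        (.para (psi cs c (.var 0) (.var 1)))) = _ from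
      rename_pred_letPara _ _ (vb_psi2 cs c))
  -- letBang for x
  have x1 : Tj [(.pl, .lolli (.bang natTy) (.bang natTy))] (.var 0)
      (.lolli (.bang natTy) (.bang natTy)) := Tj.ax _
  have x3 := Tj.app (Γ := [(.pl, .lolli (.bang natTy) (.bang natTy))]) (Δ := []) x1
    (Tj.bangI₀ tj_zero)
  have v5 := Tj.bangE (Γ := [])
    (Δ := [(.pl, .lolli (.bang natTy) (.bang natTy))]) x3 v4
  have v6 := Tj.paraI (Γ' := [(.dp, .lolli (.bang natTy) (.bang natTy))]) v5
    plainOne (.cons ⟨rfl, by decide⟩ .nil)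
  -- coercion of the input
  have y1 : Tj [(.pl, natTy)] (.var 0) natTy := Tj.ax _
  have y2 := Tj.natElim (.bang natTy) y1
  have y4 := Tj.app (Γ := [(.pl, natTy)]) (Δ := []) y2 (Tj.bangI₀ tj_sTm)
  have v7 := Tj.paraE (Γ := []) (Δ := [(.pl, natTy)]) y4 v6
  exact Tj.lam v7
end LAL
namespace LAL
open Tm

def dsc (P : Polynomial ℕ) : ℕ → List ℕ
  | 0 => [P.coeff 0]
  | j+1 => P.coeff (j+1) :: dsc P j

def dscTail (P : Polynomial ℕ) : ℕ → List ℕ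
  | 0 => []
  | j+1 => dsc P j

theorem dsc_eq (P : Polynomial ℕ) (d : ℕ) : dsc P d = P.coeff d :: dscTail P d := by
  cases d <;> rfl

theorem dsc_len (P : Polynomial ℕ) : ∀ j, (dsc P j).length = j + 1
  | 0 => rfl
  | j+1 => by simp [dsc, dsc_len P j]

theorem dscTail_len (P : Polynomial ℕ) (d : ℕ) : (dscTail P d).length = d := by
  cases d with
  | zero => rfl
  | succ j => simpa [dscTail] using dsc_len P j

theorem foldl_dsc (P : Polynomial ℕ) (n : ℕ) : ∀ (j : ℕ) (A : ℕ),
    List.foldl (fun a c => a * n + c) A (dsc P j)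
      = A * n ^ (j+1) + ∑ i ∈ Finset.range (j+1), P.coeff i * n ^ i
  | 0, A => by simp [dsc]
  | j+1, A => by
      show List.foldl _ (A * n + P.coeff (j+1)) (dsc P j) = _
      rw [foldl_dsc P n j (A * n + P.coeff (j+1))]
      conv_rhs => rw [Finset.sum_range_succ]
      ring

end LAL

open LAL in
theorem polynomial_representable' (P : Polynomial ℕ) :
    ∃ (k : ℕ) (tP : Tm),
      Tj [] tP (Ty.lolli natTy (Ty.para^[k] natTy)) ∧
      ∀ n : ℕ, Red (Tm.app tP (churchNat n)) (Tm.para^[k] (churchNat (P.eval n))) := by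
  set d := P.natDegree with hd
  refine ⟨2 * d + 2, tP (P.coeff (d+1)) (P.coeff d) (dscTail P d), ?_, ?_⟩
  · have h := tj_tP (P.coeff (d+1)) (P.coeff d) (dscTail P d)
    rwa [dscTail_len, paraN_eq] at h
  · intro n
    have h := red_tP (P.coeff (d+1)) (P.coeff d) (dscTail P d) n
    rw [dscTail_len] at h
    have hv : List.foldl (fun a c => a * n + c) (P.coeff (d+1))
        (P.coeff d :: dscTail P d) = P.eval n := by
      rw [← dsc_eq, foldl_dsc]
      have hc : P.coeff (d+1) = 0 := P.coeff_natDegree_succ_eq_zero ▸ rfl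
      rw [Polynomial.eval_eq_sum_range' (show P.natDegree < d + 1 by omega)]
      simp [hc]
    rw [hv] at h
    rw [show 2 * d + 2 = 2 * d + 1 + 1 by omega]
    exact h

open LAL in
/-- For every polynomial `P` with coefficients in ℕ there
are an integer `k` and a closed term `t_P : N ⊸ §^k N` representing `P` on
Church numerals. -/
theorem polynomial_representable (P : Polynomial ℕ) :
    ∃ (k : ℕ) (tP : Tm),
      Tj [] tP (Ty.lolli natTy (Ty.para^[k] natTy)) ∧
      ∀ n : ℕ, Red (Tm.app tP (churchNat n)) (Tm.para^[k] (churchNat (P.eval n))) := by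
  exact polynomial_representable' P
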